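/- For every PP-pattern (α,r,β) with α,β ∈ U∪Lit∪Var, there exists an LDQL query q such that ⟦(α,r,β)⟧_ctxt^W = ⟦q⟧_W^∅ for every Web of Linked Data W, where ∅ is the empty seed set of URIs. -/

import Mathlib

namespace LDQLFormal

noncomputable section
open Classical

/-! ### Basic RDF model -/

abbrev URI := ℕ
abbrev BNodeId := ℕ
abbrev LitId := ℕ
abbrev Var := ℕ
abbrev Doc := ℕ

/-- Subject terms: URIs or blank nodes. -/
inductive Subj where
  | uri (u : URI)
  | bnode (b : BNodeId)
deriving DecidableEq

/-- RDF terms (objects): URIs, blank nodes, or literals. -/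
inductive Obj where
  | uri (u : URI)
  | bnode (b : BNodeId)
  | lit (l : LitId)
deriving DecidableEq

structure RDFTriple where
  s : Subj
  p : URI
  o : Obj
deriving DecidableEq

def Subj.toObj : Subj → Obj
  | .uri u => .uri u
  | .bnode b => .bnode b

/-- The set of URIs occurring in an RDF triple. -/
def urisOf (t : RDFTriple) : Set URI :=
  {u | t.s = .uri u ∨ t.p = u ∨ t.o = .uri u}

/-- A Web of Linked Data: a finite set of documents, the data in each
document (a finite set of RDF triples), and a surjective partial function
`adoc` from URIs to documents. -/
structure Web where
  docs : Set Doc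
  finite_docs : docs.Finite
  data : Doc → Finset RDFTriple
  adoc : URI → Option Doc
  adoc_mem : ∀ u d, adoc u = some d → d ∈ docs
  adoc_surj : ∀ d ∈ docs, ∃ u, adoc u = some d

/-- Link graph edge `(d, (t,u), d')`. -/
def Web.edge (W : Web) (d : Doc) (t : RDFTriple) (u : URI) (d' : Doc) : Prop :=
  d ∈ W.docs ∧ t ∈ W.data d ∧ u ∈ urisOf t ∧ W.adoc u = some d'

/-! ### Link patterns -/

/-- Components of a link pattern drawn from `U ∪ {*, +}`. -/
inductive LPUP where
  | uri (u : URI)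
  | star
  | plus
deriving DecidableEq

/-- Components of a link pattern drawn from `U ∪ Lit ∪ {*, +}`. -/
inductive LPULP where
  | uri (u : URI)
  | lit (l : LitId)
  | star
  | plus
deriving DecidableEq

structure LinkPattern where
  c1 : LPUP
  c2 : LPUP
  c3 : LPULP

def matchSubj (y : LPUP) (uctx : URI) (x : Subj) : Prop :=
  match y with
  | .uri w => x = .uri w
  | .star => True
  | .plus => x = .uri uctx

def matchPred (y : LPUP) (uctx : URI) (x : URI) : Prop :=
  match y with
  | .uri w => x = w
  | .star => True
  | .plus => x = uctx

def matchObj (y : LPULP) (uctx : URI) (x : Obj) : Prop :=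
  match y with
  | .uri w => x = .uri w
  | .lit l => x = .lit l
  | .star => True
  | .plus => x = .uri uctx

/-- An edge with label `(t,u)` matches a link pattern in the context of `uctx`. -/
def lpMatch (lp : LinkPattern) (uctx : URI) (t : RDFTriple) (u : URI) : Prop :=
  ((lp.c1 = .star ∧ t.s = .uri u) ∨ (lp.c2 = .star ∧ t.p = u) ∨ (lp.c3 = .star ∧ t.o = .uri u))
  ∧ matchSubj lp.c1 uctx t.s ∧ matchPred lp.c2 uctx t.p ∧ matchObj lp.c3 uctx t.o

/-! ### Solution mappings -/

abbrev Mapping := Var → Option Obj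

def mdom (μ : Mapping) : Set Var := {v | μ v ≠ none}

def emptyMap : Mapping := fun _ => none

def single (v : Var) (o : Obj) : Mapping := fun w => if w = v then some o else none

def compatible (μ1 μ2 : Mapping) : Prop :=
  ∀ v a b, μ1 v = some a → μ2 v = some b → a = b

def munion (μ1 μ2 : Mapping) : Mapping := fun v =>
  match μ1 v with
  | some a => some a
  | none => μ2 v

/-- Join of two sets of solution mappings. -/
def mjoin (Ω1 Ω2 : Set Mapping) : Set Mapping :=
  {μ | ∃ μ1 ∈ Ω1, ∃ μ2 ∈ Ω2, compatible μ1 μ2 ∧ μ = munion μ1 μ2}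

/-- Restriction of a mapping to a finite set of variables. -/
def restrictV (V : Finset Var) (μ : Mapping) : Mapping := fun v =>
  if v ∈ V then μ v else none

/-! ### SPARQL graph patterns -/

inductive PTerm where
  | var (v : Var)
  | term (o : Obj)
deriving DecidableEq

structure TriplePattern where
  sj : PTerm
  pr : PTerm
  ob : PTerm
deriving DecidableEq

def PTerm.varsOf : PTerm → Set Var
  | .var v => {v}
  | .term _ => ∅

def TriplePattern.varsOf (t : TriplePattern) : Set Var :=
  t.sj.varsOf ∪ t.pr.varsOf ∪ t.ob.varsOf

def pval (μ : Mapping) : PTerm → Option Obj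
  | .var v => μ v
  | .term o => some o

def objToSubj : Obj → Option Subj
  | .uri u => some (.uri u)
  | .bnode b => some (.bnode b)
  | .lit _ => none

def objToURI : Obj → Option URI
  | .uri u => some u
  | _ => none

/-- `tpInst μ tp = some t` iff `μ[tp] = t` (all variables of `tp` bound by `μ`
and the instantiation is a well-formed RDF triple). -/
def tpInst (μ : Mapping) (t : TriplePattern) : Option RDFTriple := do
  let s ← pval μ t.sj
  let s' ← objToSubj s
  let p ← pval μ t.pr
  let p' ← objToURI p
  let o ← pval μ t.ob
  return ⟨s', p', o⟩

/-- Filter conditions. -/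
inductive Cond where
  | eq (a b : PTerm)
  | neq (a b : PTerm)
  | and (c1 c2 : Cond)
  | or (c1 c2 : Cond)
  | not (c : Cond)

def condHolds (μ : Mapping) : Cond → Prop
  | .eq a b => ∃ x, pval μ a = some x ∧ pval μ b = some x
  | .neq a b => ∃ x y, pval μ a = some x ∧ pval μ b = some y ∧ x ≠ y
  | .and c1 c2 => condHolds μ c1 ∧ condHolds μ c2
  | .or c1 c2 => condHolds μ c1 ∨ condHolds μ c2
  | .not c => ¬ condHolds μ c

/-- SPARQL graph patterns, built from triple patterns with
AND, UNION, OPT, FILTER, GRAPH and BIND. -/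
inductive GP where
  | empty
  | tp (t : TriplePattern)
  | and (g1 g2 : GP)
  | union (g1 g2 : GP)
  | opt (g1 g2 : GP)
  | filter (g : GP) (c : Cond)
  | graphU (u : URI) (g : GP)
  | graphV (v : Var) (g : GP)
  | bind (g : GP) (o : Obj) (v : Var)

/-- An RDF dataset: a default graph together with named graphs. -/
structure RDFDataset where
  dflt : Set RDFTriple
  named : URI → Option (Set RDFTriple)

/-- Standard set-based SPARQL evaluation of a graph pattern over an RDF
dataset `D` with active graph `G`. -/
def evalGP (D : RDFDataset) : GP → Set RDFTriple → Set Mapping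
  | .empty, _ => {emptyMap}
  | .tp t, G => {μ | mdom μ = t.varsOf ∧ ∃ tr ∈ G, tpInst μ t = some tr}
  | .and g1 g2, G => mjoin (evalGP D g1 G) (evalGP D g2 G)
  | .union g1 g2, G => evalGP D g1 G ∪ evalGP D g2 G
  | .opt g1 g2, G =>
      mjoin (evalGP D g1 G) (evalGP D g2 G) ∪
        {μ | μ ∈ evalGP D g1 G ∧ ∀ μ2 ∈ evalGP D g2 G, ¬ compatible μ μ2}
  | .filter g c, G => {μ | μ ∈ evalGP D g G ∧ condHolds μ c}
  | .graphU u g, _ => {μ | ∃ G', D.named u = some G' ∧ μ ∈ evalGP D g G'}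
  | .graphV v g, _ =>
      {μ | ∃ u G', D.named u = some G' ∧ ∃ μ' ∈ evalGP D g G',
            compatible μ' (single v (.uri u)) ∧ μ = munion μ' (single v (.uri u))}
  | .bind g o v, G => {μ' | ∃ μ ∈ evalGP D g G, μ v = none ∧ μ' = munion μ (single v o)}

/-! ### LDQL syntax -/

mutual
/-- LDQL queries. -/
inductive LDQL where
  | base (l : LPE) (P : GP)
  | seedU (U0 : Finset URI) (q : LDQL)
  | seedV (v : Var) (q : LDQL)
  | qand (q1 q2 : LDQL)
  | qunion (q1 q2 : LDQL)
  | proj (V0 : Finset Var) (q : LDQL)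

/-- Link path expressions. -/
inductive LPE where
  | eps
  | pat (lp : LinkPattern)
  | seq (l1 l2 : LPE)
  | alt (l1 l2 : LPE)
  | star (l : LPE)
  | test (l : LPE)
  | sub (v : Var) (q : LDQL)
end

/-- `dataset_W(U0)`. -/
def datasetW (W : Web) (U0 : Set URI) : RDFDataset where
  dflt := {t | ∃ u ∈ U0, ∃ d, W.adoc u = some d ∧ t ∈ W.data d}
  named := fun u =>
    if u ∈ U0 then (W.adoc u).map (fun d => ((W.data d : Finset RDFTriple) : Set RDFTriple))
    else none

/-! ### LDQL semantics -/

mutual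
/-- The S-based evaluation `⟦q⟧_W^S` of an LDQL query. -/
def evalQ (W : Web) : LDQL → Set URI → Set Mapping
  | .base l P, S =>
      evalGP (datasetW W {u' | ∃ u ∈ S, u' ∈ evalL W l u}) P
        (datasetW W {u' | ∃ u ∈ S, u' ∈ evalL W l u}).dflt
  | .seedU U0 q, _ => evalQ W q ↑U0
  | .seedV v q, _ => ⋃ u : URI, mjoin (evalQ W q {u}) {single v (.uri u)}
  | .qand q1 q2, S => mjoin (evalQ W q1 S) (evalQ W q2 S)
  | .qunion q1 q2, S => evalQ W q1 S ∪ evalQ W q2 S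
  | .proj V0 q, S => (restrictV V0) '' (evalQ W q S)

/-- The `uctx`-based evaluation `⟦l⟧_W^uctx` of a link path expression. -/
def evalL (W : Web) : LPE → URI → Set URI
  | .eps, u => if (W.adoc u).isSome then {u} else ∅
  | .pat lp, u =>
      {u' | ∃ d, W.adoc u = some d ∧ ∃ t d', W.edge d t u' d' ∧ lpMatch lp u t u'}
  | .seq l1 l2, u => {u'' | ∃ u', u' ∈ evalL W l1 u ∧ u'' ∈ evalL W l2 u'}
  | .alt l1 l2, u => evalL W l1 u ∪ evalL W l2 u
  | .star l, u =>
      {u' | (W.adoc u).isSome ∧ Relation.ReflTransGen (fun a b => b ∈ evalL W l a) u u'}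
  | .test l, u => {u' | u' = u ∧ evalL W l u ≠ ∅}
  | .sub v q, u =>
      {u' | (W.adoc u).isSome ∧ ∃ μ ∈ evalQ W q {u}, μ v = some (.uri u')}
end

/-- Semantic equivalence of LDQL queries. -/
def equivQ (q q' : LDQL) : Prop :=
  ∀ (W : Web) (S : Set URI), S.Finite → evalQ W q S = evalQ W q' S


/-! ### LPEs built only from ε, ⟨?v,q⟩ and (·)* -/

mutual
/-- All LPEs occurring in the query consist only of `ε`, `⟨?v,q⟩` and `(·)*`. -/
def LDQL.simple : LDQL → Prop
  | .base l _ => l.simple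
  | .seedU _ q => q.simple
  | .seedV _ q => q.simple
  | .qand q1 q2 => q1.simple ∧ q2.simple
  | .qunion q1 q2 => q1.simple ∧ q2.simple
  | .proj _ q => q.simple

/-- The LPE consists only of `ε`, `⟨?v,q⟩` and `(·)*`. -/
def LPE.simple : LPE → Prop
  | .eps => True
  | .pat _ => False
  | .seq _ _ => False
  | .alt _ _ => False
  | .star l => l.simple
  | .test _ => False
  | .sub _ q => q.simple
end

/-! ### Property paths under context-based semantics -/

/-- Property path expressions. -/
inductive PP where
  | uri (p : URI)
  | neg (us : List URI)
  | seq (r1 r2 : PP)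
  | alt (r1 r2 : PP)
  | star (r : PP)

/-- Terms allowed in PP-patterns: URIs, literals and variables. -/
inductive PPTerm where
  | uri (u : URI)
  | lit (l : LitId)
  | var (v : Var)

/-- The context selector `C_W`. -/
def CW (W : Web) (a : Obj) : Set RDFTriple :=
  {t | ∃ u d, a = .uri u ∧ W.adoc u = some d ∧ t ∈ W.data d ∧ t.s = .uri u}

/-- The RDF terms occurring in triples of documents of `W`. -/
def termsW (W : Web) : Set Obj :=
  {a | ∃ d ∈ W.docs, ∃ t ∈ W.data d, a = t.s.toObj ∨ a = .uri t.p ∨ a = t.o}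

/-- The binary relation on RDF terms induced by a PP expression under
context-based semantics. -/
def ppRel (W : Web) : PP → Obj → Obj → Prop
  | .uri p, a, b => ∃ s, objToSubj a = some s ∧ (⟨s, p, b⟩ : RDFTriple) ∈ CW W a
  | .neg us, a, b => ∃ p, p ∉ us ∧ ∃ s, objToSubj a = some s ∧ (⟨s, p, b⟩ : RDFTriple) ∈ CW W a
  | .seq r1 r2, a, b => ∃ m, ppRel W r1 a m ∧ ppRel W r2 m b
  | .alt r1 r2, a, b => ppRel W r1 a b ∨ ppRel W r2 a b
  | .star r, a, b => (a = b ∧ a ∈ termsW W) ∨ Relation.TransGen (ppRel W r) a b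

def PPTerm.toPval (μ : Mapping) : PPTerm → Option Obj
  | .uri u => some (.uri u)
  | .lit l => some (.lit l)
  | .var v => μ v

def ppVars (α β : PPTerm) : Set Var := {v | α = .var v ∨ β = .var v}

/-- The context-based evaluation `⟦(α,r,β)⟧_ctxt^W` of a PP-pattern. -/
def ctxtEvalPat (W : Web) (α : PPTerm) (r : PP) (β : PPTerm) : Set Mapping :=
  {μ | mdom μ = ppVars α β ∧
    ∃ a b, α.toPval μ = some a ∧ β.toPval μ = some b ∧ ppRel W r a b}

/-- PP-based SPARQL queries. -/
inductive PPQ where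
  | pat (α : PPTerm) (r : PP) (β : PPTerm)
  | and (R1 R2 : PPQ)
  | union (R1 R2 : PPQ)
  | opt (R1 R2 : PPQ)
  | filter (R : PPQ) (c : Cond)

/-- The context-based evaluation `⟦R⟧_ctxt^W` of a PP-based SPARQL query. -/
def evalPPQ (W : Web) : PPQ → Set Mapping
  | .pat α r β => ctxtEvalPat W α r β
  | .and R1 R2 => mjoin (evalPPQ W R1) (evalPPQ W R2)
  | .union R1 R2 => evalPPQ W R1 ∪ evalPPQ W R2
  | .opt R1 R2 =>
      mjoin (evalPPQ W R1) (evalPPQ W R2) ∪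
        {μ | μ ∈ evalPPQ W R1 ∧ ∀ μ2 ∈ evalPPQ W R2, ¬ compatible μ μ2}
  | .filter R c => {μ | μ ∈ evalPPQ W R ∧ condHolds μ c}

/-! ### NautiLOD -/

/-- NautiLOD expressions (without action rules). -/
inductive NLOD where
  | fwd (p : URI)
  | bwd (p : URI)
  | any
  | seq (n1 n2 : NLOD)
  | alt (n1 n2 : NLOD)
  | star (n : NLOD)
  | ask (n : NLOD) (P : GP)

/-- Dataset used for evaluating an ASK pattern over the data of a single document. -/
def askDS (W : Web) (d : Doc) : RDFDataset :=
  ⟨((W.data d : Finset RDFTriple) : Set RDFTriple), fun _ => none⟩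

/-- NautiLOD semantics `⟦n⟧_W^u`. -/
def nlEval (W : Web) : NLOD → URI → Set URI
  | .fwd p, u => {u' | ∃ d, W.adoc u = some d ∧ (⟨.uri u, p, .uri u'⟩ : RDFTriple) ∈ W.data d}
  | .bwd p, u => {u' | ∃ d, W.adoc u = some d ∧ (⟨.uri u', p, .uri u⟩ : RDFTriple) ∈ W.data d}
  | .any, u => {u' | ∃ d q, W.adoc u = some d ∧ (⟨.uri u, q, .uri u'⟩ : RDFTriple) ∈ W.data d}
  | .seq n1 n2, u =>
      {u'' | ∃ u', u' ∈ nlEval W n1 u ∧ (W.adoc u').isSome ∧ u'' ∈ nlEval W n2 u'}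
  | .alt n1 n2, u => nlEval W n1 u ∪ nlEval W n2 u
  | .star n, u =>
      {u' | Relation.ReflTransGen (fun a b => (W.adoc a).isSome ∧ b ∈ nlEval W n a) u u'}
  | .ask n P, u =>
      {u' | u' ∈ nlEval W n u ∧
        ∃ d, W.adoc u' = some d ∧ evalGP (askDS W d) P ((W.data d : Finset RDFTriple) : Set RDFTriple) ≠ ∅}

/-! ### Variables occurring in patterns and NautiLOD expressions -/

def condHasVar (v : Var) : Cond → Prop
  | .eq a b => a = .var v ∨ b = .var v
  | .neq a b => a = .var v ∨ b = .var v
  | .and c1 c2 => condHasVar v c1 ∨ condHasVar v c2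
  | .or c1 c2 => condHasVar v c1 ∨ condHasVar v c2
  | .not c => condHasVar v c

/-- The variable `v` occurs in the SPARQL graph pattern. -/
def gpHasVar (v : Var) : GP → Prop
  | .empty => False
  | .tp t => t.sj = .var v ∨ t.pr = .var v ∨ t.ob = .var v
  | .and g1 g2 => gpHasVar v g1 ∨ gpHasVar v g2
  | .union g1 g2 => gpHasVar v g1 ∨ gpHasVar v g2
  | .opt g1 g2 => gpHasVar v g1 ∨ gpHasVar v g2
  | .filter g c => gpHasVar v g ∨ condHasVar v c
  | .graphU _ g => gpHasVar v g
  | .graphV w g => v = w ∨ gpHasVar v g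
  | .bind g _ w => v = w ∨ gpHasVar v g

/-- The variable `v` occurs in the NautiLOD expression. -/
def nlodHasVar (v : Var) : NLOD → Prop
  | .fwd _ => False
  | .bwd _ => False
  | .any => False
  | .seq n1 n2 => nlodHasVar v n1 ∨ nlodHasVar v n2
  | .alt n1 n2 => nlodHasVar v n1 ∨ nlodHasVar v n2
  | .star n => nlodHasVar v n
  | .ask n P => nlodHasVar v n ∨ gpHasVar v P

/-! ### Reachability-based query semantics -/

/-- A reachability criterion. -/
def ReachCrit := RDFTriple → URI → GP → Prop

def cAll : ReachCrit := fun _ _ _ => True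

def cNone : ReachCrit := fun _ _ _ => False

/-- The list of triple patterns occurring in a SPARQL graph pattern. -/
def GP.tps : GP → List TriplePattern
  | .empty => []
  | .tp t => [t]
  | .and g1 g2 => g1.tps ++ g2.tps
  | .union g1 g2 => g1.tps ++ g2.tps
  | .opt g1 g2 => g1.tps ++ g2.tps
  | .filter g _ => g.tps
  | .graphU _ g => g.tps
  | .graphV _ g => g.tps
  | .bind g _ _ => g.tps

def cMatch : ReachCrit := fun t _ P => ∃ (μ : Mapping) (tp : TriplePattern),
  tp ∈ P.tps ∧ tpInst μ tp = some t

/-- `(c,S,P)`-reachability of a document in `W`. -/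
inductive Reachable (W : Web) (c : ReachCrit) (S : Set URI) (P : GP) : Doc → Prop where
  | seed (u : URI) (d : Doc) : u ∈ S → W.adoc u = some d → Reachable W c S P d
  | step (dsrc : Doc) (t : RDFTriple) (u : URI) (d : Doc) :
      Reachable W c S P dsrc → W.edge dsrc t u d → c t u P → Reachable W c S P d

/-- The RDF graph consisting of all triples of all `(c,S,P)`-reachable documents. -/
def reachGraph (W : Web) (c : ReachCrit) (S : Set URI) (P : GP) : Set RDFTriple :=
  {t | ∃ d, Reachable W c S P d ∧ t ∈ W.data d}

/-- The S-based evaluation of `P` over `W` under `c`-semantics. -/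
def reachEval (W : Web) (c : ReachCrit) (S : Set URI) (P : GP) : Set Mapping :=
  evalGP ⟨reachGraph W c S P, fun _ => none⟩ P (reachGraph W c S P)

/-! ### Constructions used in Theorems on c_Match and NautiLOD -/

def addFilter (v : Var) (pt : PTerm) (g : GP) : GP :=
  match pt with
  | .var _ => g
  | .term o => .filter g (.eq (.var v) (.term o))

/-- The basic LDQL query `q_k = ⟨ε,P_k⟩` associated with a triple pattern. -/
def matchQ (vs vp vo : Var) (t : TriplePattern) : LDQL :=
  .base .eps (addFilter vo t.ob (addFilter vp t.pr (addFilter vs t.sj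
    (.tp ⟨.var vs, .var vp, .var vo⟩))))

/-- An LPE whose evaluation is empty everywhere. -/
def emptyLPE (v : Var) : LPE := .sub v (.base .eps .empty)

/-- The LPE `l_Match` associated with a SPARQL graph pattern. -/
def lMatch (vs vp vo : Var) (P : GP) : LPE :=
  .star ((P.tps.map (fun t =>
      LPE.alt (.sub vs (matchQ vs vp vo t))
        (LPE.alt (.sub vp (matchQ vs vp vo t)) (.sub vo (matchQ vs vp vo t))))).foldr
    LPE.alt (emptyLPE vs))

/-- The translation `trans_N` from NautiLOD expressions to LPEs, using the
(fresh, pairwise distinct) variables `vx`, `vu`, `vp`. -/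
def transN (vx vu vp : Var) : NLOD → LPE
  | .fwd p => .pat ⟨.plus, .uri p, .star⟩
  | .bwd p => .pat ⟨.star, .uri p, .plus⟩
  | .any => .sub vx (.base .eps (.graphV vu (.tp ⟨.var vu, .var vp, .var vx⟩)))
  | .seq n1 n2 => .seq (transN vx vu vp n1) (transN vx vu vp n2)
  | .alt n1 n2 => .alt (transN vx vu vp n1) (transN vx vu vp n2)
  | .star n => .star (transN vx vu vp n)
  | .ask n P => .seq (transN vx vu vp n) (.test (.sub vx (.base .eps (.graphV vx P))))


/-! ### Auxiliary infrastructure -/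

lemma objToSubj_eq_some {a : Obj} {s : Subj} : objToSubj a = some s ↔ a = s.toObj := by
  cases a <;> cases s <;> simp [objToSubj, Subj.toObj]

lemma objToURI_eq_some {a : Obj} {p : URI} : objToURI a = some p ↔ a = .uri p := by
  cases a <;> simp [objToURI]

lemma toObj_inj {s t : Subj} (h : s.toObj = t.toObj) : s = t := by
  cases s <;> cases t <;> simp [Subj.toObj] at h ⊢ <;> exact h

lemma tpInst_eq_some {μ : Mapping} {T : TriplePattern} {tr : RDFTriple} :
    tpInst μ T = some tr ↔
      pval μ T.sj = some tr.s.toObj ∧ pval μ T.pr = some (.uri tr.p) ∧ pval μ T.ob = some tr.o := by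
  constructor
  · intro h
    simp only [tpInst, bind, Option.bind_eq_some_iff, pure, Option.some.injEq] at h
    obtain ⟨s0, hs0, s1, hs1, p0, hp0, p1, hp1, o0, ho0, h⟩ := h
    subst h
    rw [objToSubj_eq_some] at hs1
    rw [objToURI_eq_some] at hp1
    subst hs1; subst hp1
    exact ⟨hs0, hp0, ho0⟩
  · rintro ⟨h1, h2, h3⟩
    simp only [tpInst, bind, h1, h2, h3, Option.bind_some]
    have : objToSubj tr.s.toObj = some tr.s := objToSubj_eq_some.2 rfl
    rw [this]
    have : objToURI (Obj.uri tr.p) = some tr.p := rfl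
    simp [this]

/-! ### Mapping constructors -/

def pairMap (x : Var) (a : Obj) (y : Var) (b : Obj) : Mapping := munion (single x a) (single y b)
def mk3 (x : Var) (a : Obj) (y : Var) (b : Obj) (z : Var) (c : Obj) : Mapping :=
  munion (single x a) (pairMap y b z c)
def mk4 (x : Var) (a : Obj) (y : Var) (b : Obj) (z : Var) (c : Obj) (w : Var) (d : Obj) : Mapping :=
  munion (single x a) (mk3 y b z c w d)

lemma single_app (v : Var) (o : Obj) (w : Var) : single v o w = if w = v then some o else none := rfl

lemma munion_app (μ1 μ2 : Mapping) (v : Var) :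
    munion μ1 μ2 v = (μ1 v).or (μ2 v) := by
  unfold munion
  cases μ1 v <;> simp [Option.or]

lemma pairMap_app (x : Var) (a : Obj) (y : Var) (b : Obj) (v : Var) :
    pairMap x a y b v = if v = x then some a else if v = y then some b else none := by
  simp only [pairMap, munion_app, single_app]
  split_ifs <;> simp [Option.or]

lemma mk3_app (x : Var) (a : Obj) (y : Var) (b : Obj) (z : Var) (c : Obj) (v : Var) :
    mk3 x a y b z c v =
      if v = x then some a else if v = y then some b else if v = z then some c else none := by
  simp only [mk3, munion_app, single_app, pairMap_app]
  split_ifs <;> simp [Option.or]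

lemma mk4_app (x : Var) (a : Obj) (y : Var) (b : Obj) (z : Var) (c : Obj) (w : Var) (d : Obj) (v : Var) :
    mk4 x a y b z c w d v =
      if v = x then some a else if v = y then some b else
        if v = z then some c else if v = w then some d else none := by
  simp only [mk4, munion_app, single_app, mk3_app]
  split_ifs <;> simp [Option.or]

lemma munion_empty_left (μ : Mapping) : munion emptyMap μ = μ := by
  funext v; simp [munion_app, emptyMap, Option.or]

lemma munion_single_absorb {μ : Mapping} {x : Var} {c : Obj} (h : μ x = some c) :
    munion μ (single x c) = μ := by
  funext v
  rw [munion_app, single_app]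
  rcases h' : μ v with _ | o
  · split_ifs with hv
    · subst hv; rw [h'] at h; exact absurd h (by simp)
    · simp [Option.or]
  · simp [Option.or]

lemma mdom_single (v : Var) (o : Obj) : mdom (single v o) = {v} := by
  ext w; simp [mdom, single_app]

lemma mdom_pairMap {x y : Var} (h : x ≠ y) (a b : Obj) :
    mdom (pairMap x a y b) = {x, y} := by
  ext w
  simp only [mdom, Set.mem_setOf_eq, pairMap_app, Set.mem_insert_iff, Set.mem_singleton_iff]
  split_ifs <;> simp_all

lemma mdom_mk3 {x y z : Var} (hxy : x ≠ y) (hxz : x ≠ z) (hyz : y ≠ z) (a b c : Obj) :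
    mdom (mk3 x a y b z c) = {x, y, z} := by
  ext w
  simp only [mdom, Set.mem_setOf_eq, mk3_app, Set.mem_insert_iff, Set.mem_singleton_iff]
  split_ifs <;> simp_all

lemma eq_pairMap {μ : Mapping} {x y : Var} {a b : Obj} (hxy : x ≠ y)
    (h : mdom μ = {x, y}) (hx : μ x = some a) (hy : μ y = some b) :
    μ = pairMap x a y b := by
  funext v
  rw [pairMap_app]
  split_ifs with h1 h2
  · subst h1; exact hx
  · subst h2; exact hy
  · have : v ∉ mdom μ := by rw [h]; simp [h1, h2]
    simpa [mdom] using this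

lemma eq_mk3 {μ : Mapping} {x y z : Var} {a b c : Obj}
    (h : mdom μ = {x, y, z}) (hx : μ x = some a) (hy : μ y = some b) (hz : μ z = some c) :
    μ = mk3 x a y b z c := by
  funext v
  rw [mk3_app]
  split_ifs with h1 h2 h3
  · subst h1; exact hx
  · subst h2; exact hy
  · subst h3; exact hz
  · have : v ∉ mdom μ := by rw [h]; simp [h1, h2, h3]
    simpa [mdom] using this

lemma eq_emptyMap {μ : Mapping} (h : mdom μ = ∅) : μ = emptyMap := by
  funext v
  have : v ∉ mdom μ := by rw [h]; simp
  simpa [mdom, emptyMap] using this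

lemma pairMap_comm {x y : Var} (h : x ≠ y) (a b : Obj) :
    pairMap x a y b = pairMap y b x a := by
  funext v
  rw [pairMap_app, pairMap_app]
  split_ifs with h1 h2 <;> simp_all
/-! ### Join computations -/

lemma mem_mjoin {Ω1 Ω2 : Set Mapping} {μ : Mapping} :
    μ ∈ mjoin Ω1 Ω2 ↔ ∃ μ1 ∈ Ω1, ∃ μ2 ∈ Ω2, compatible μ1 μ2 ∧ μ = munion μ1 μ2 := Iff.rfl

lemma mjoin_pair_pair {x m y : Var} (hxm : x ≠ m) (hxy : x ≠ y) (hmy : m ≠ y)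
    (P R : Obj → Obj → Prop) :
    mjoin {μ | ∃ a b, μ = pairMap x a m b ∧ P a b} {μ | ∃ b c, μ = pairMap m b y c ∧ R b c}
      = {μ | ∃ a b c, μ = mk3 x a m b y c ∧ P a b ∧ R b c} := by
  ext μ
  simp only [mem_mjoin, Set.mem_setOf_eq]
  constructor
  · rintro ⟨μ1, ⟨a, b, rfl, hP⟩, μ2, ⟨b', c, rfl, hR⟩, hc, rfl⟩
    have hb : b = b' := hc m b b' (by simp [pairMap_app, hxm.symm]) (by simp [pairMap_app])
    subst hb
    refine ⟨a, b, c, ?_, hP, hR⟩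
    funext v
    simp only [munion_app, pairMap_app, mk3_app]
    split_ifs <;> simp_all [Option.or]
  · rintro ⟨a, b, c, rfl, hP, hR⟩
    refine ⟨pairMap x a m b, ⟨a, b, rfl, hP⟩, pairMap m b y c, ⟨b, c, rfl, hR⟩, ?_, ?_⟩
    · intro v a' b' h1 h2
      rw [pairMap_app] at h1 h2
      split_ifs at h1 h2 <;> simp_all
    · funext v
      simp only [munion_app, pairMap_app, mk3_app]
      split_ifs <;> simp_all [Option.or]

lemma mjoin_single_pair {m y : Var} (hmy : m ≠ y) (P : Obj → Prop) (R : Obj → Obj → Prop) :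
    mjoin {μ | ∃ b, μ = single m b ∧ P b} {μ | ∃ b c, μ = pairMap m b y c ∧ R b c}
      = {μ | ∃ b c, μ = pairMap m b y c ∧ P b ∧ R b c} := by
  ext μ
  simp only [mem_mjoin, Set.mem_setOf_eq]
  constructor
  · rintro ⟨μ1, ⟨b, rfl, hP⟩, μ2, ⟨b', c, rfl, hR⟩, hc, rfl⟩
    have hb : b = b' := hc m b b' (by simp [single_app]) (by simp [pairMap_app])
    subst hb
    refine ⟨b, c, ?_, hP, hR⟩
    funext v
    simp only [munion_app, pairMap_app, single_app]
    split_ifs <;> simp_all [Option.or]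
  · rintro ⟨b, c, rfl, hP, hR⟩
    refine ⟨single m b, ⟨b, rfl, hP⟩, pairMap m b y c, ⟨b, c, rfl, hR⟩, ?_, ?_⟩
    · intro v a' b' h1 h2
      rw [single_app] at h1; rw [pairMap_app] at h2
      split_ifs at h1 h2 <;> simp_all
    · funext v
      simp only [munion_app, pairMap_app, single_app]
      split_ifs <;> simp_all [Option.or]

lemma mjoin_mk3_pair {x m m' y : Var} (hxm : x ≠ m) (hxm' : x ≠ m') (hxy : x ≠ y)
    (hmm' : m ≠ m') (hmy : m ≠ y) (hm'y : m' ≠ y)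
    (P : Obj → Obj → Obj → Prop) (R : Obj → Obj → Prop) :
    mjoin {μ | ∃ a b c, μ = mk3 x a m b m' c ∧ P a b c}
      {μ | ∃ c d, μ = pairMap m' c y d ∧ R c d}
      = {μ | ∃ a b c d, μ = mk4 x a m b m' c y d ∧ P a b c ∧ R c d} := by
  ext μ
  simp only [mem_mjoin, Set.mem_setOf_eq]
  constructor
  · rintro ⟨μ1, ⟨a, b, c, rfl, hP⟩, μ2, ⟨c', d, rfl, hR⟩, hc, rfl⟩
    have hb : c = c' := hc m' c c'
      (by simp [mk3_app, hxm'.symm, hmm'.symm]) (by simp [pairMap_app])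
    subst hb
    refine ⟨a, b, c, d, ?_, hP, hR⟩
    funext v
    simp only [munion_app, pairMap_app, mk3_app, mk4_app]
    split_ifs <;> simp_all [Option.or]
  · rintro ⟨a, b, c, d, rfl, hP, hR⟩
    refine ⟨mk3 x a m b m' c, ⟨a, b, c, rfl, hP⟩, pairMap m' c y d, ⟨c, d, rfl, hR⟩, ?_, ?_⟩
    · intro v a' b' h1 h2
      rw [mk3_app] at h1; rw [pairMap_app] at h2
      split_ifs at h1 h2 <;> simp_all
    · funext v
      simp only [munion_app, pairMap_app, mk3_app, mk4_app]
      split_ifs <;> simp_all [Option.or]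

lemma mjoin_pair_pair_same {x y : Var} (hxy : x ≠ y) (P R : Obj → Obj → Prop) :
    mjoin {μ | ∃ a b, μ = pairMap x a y b ∧ P a b} {μ | ∃ a b, μ = pairMap x a y b ∧ R a b}
      = {μ | ∃ a b, μ = pairMap x a y b ∧ P a b ∧ R a b} := by
  ext μ
  simp only [mem_mjoin, Set.mem_setOf_eq]
  constructor
  · rintro ⟨μ1, ⟨a, b, rfl, hP⟩, μ2, ⟨a', b', rfl, hR⟩, hc, rfl⟩
    have ha : a = a' := hc x a a' (by simp [pairMap_app]) (by simp [pairMap_app])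
    have hb : b = b' := hc y b b' (by simp [pairMap_app, hxy.symm]) (by simp [pairMap_app, hxy.symm])
    subst ha; subst hb
    refine ⟨a, b, ?_, hP, hR⟩
    funext v
    simp only [munion_app, pairMap_app]
    split_ifs <;> simp_all [Option.or]
  · rintro ⟨a, b, rfl, hP, hR⟩
    refine ⟨pairMap x a y b, ⟨a, b, rfl, hP⟩, pairMap x a y b, ⟨a, b, rfl, hR⟩, ?_, ?_⟩
    · intro v a' b' h1 h2; rw [h1] at h2; exact Option.some_inj.1 h2
    · funext v
      simp only [munion_app, pairMap_app]
      split_ifs <;> simp_all [Option.or]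

lemma mjoin_pair_constR {x y : Var} (hxy : x ≠ y) (P : Obj → Obj → Prop) (c : Obj) :
    mjoin {μ | ∃ a b, μ = pairMap x a y b ∧ P a b} {single y c}
      = {μ | ∃ a, μ = pairMap x a y c ∧ P a c} := by
  ext μ
  simp only [mem_mjoin, Set.mem_setOf_eq, Set.mem_singleton_iff]
  constructor
  · rintro ⟨μ1, ⟨a, b, rfl, hP⟩, μ2, rfl, hc, rfl⟩
    have hb : b = c := hc y b c (by simp [pairMap_app, hxy.symm]) (by simp [single_app])
    subst hb
    exact ⟨a, (munion_single_absorb (by simp [pairMap_app, hxy.symm])), hP⟩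
  · rintro ⟨a, rfl, hP⟩
    refine ⟨pairMap x a y c, ⟨a, c, rfl, hP⟩, single y c, rfl, ?_, ?_⟩
    · intro v a' b' h1 h2
      rw [pairMap_app] at h1; rw [single_app] at h2
      split_ifs at h1 h2 <;> simp_all
    · exact (munion_single_absorb (by simp [pairMap_app, hxy.symm])).symm

lemma mjoin_pair_constL {x y : Var} (hxy : x ≠ y) (P : Obj → Obj → Prop) (c : Obj) :
    mjoin {μ | ∃ a b, μ = pairMap x a y b ∧ P a b} {single x c}
      = {μ | ∃ b, μ = pairMap x c y b ∧ P c b} := by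
  ext μ
  simp only [mem_mjoin, Set.mem_setOf_eq, Set.mem_singleton_iff]
  constructor
  · rintro ⟨μ1, ⟨a, b, rfl, hP⟩, μ2, rfl, hc, rfl⟩
    have ha : a = c := hc x a c (by simp [pairMap_app]) (by simp [single_app])
    subst ha
    exact ⟨b, (munion_single_absorb (by simp [pairMap_app])), hP⟩
  · rintro ⟨b, rfl, hP⟩
    refine ⟨pairMap x c y b, ⟨c, b, rfl, hP⟩, single x c, rfl, ?_, ?_⟩
    · intro v a' b' h1 h2
      rw [pairMap_app] at h1; rw [single_app] at h2
      split_ifs at h1 h2 <;> simp_all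
    · exact (munion_single_absorb (by simp [pairMap_app])).symm

lemma mjoin_single_same {y : Var} (P R : Obj → Prop) :
    mjoin {μ | ∃ b, μ = single y b ∧ P b} {μ | ∃ b, μ = single y b ∧ R b}
      = {μ | ∃ b, μ = single y b ∧ P b ∧ R b} := by
  ext μ
  simp only [mem_mjoin, Set.mem_setOf_eq]
  constructor
  · rintro ⟨μ1, ⟨b, rfl, hP⟩, μ2, ⟨b', rfl, hR⟩, hc, rfl⟩
    have hb : b = b' := hc y b b' (by simp [single_app]) (by simp [single_app])
    subst hb
    exact ⟨b, (munion_single_absorb (by simp [single_app])), hP, hR⟩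
  · rintro ⟨b, rfl, hP, hR⟩
    refine ⟨single y b, ⟨b, rfl, hP⟩, single y b, ⟨b, rfl, hR⟩, ?_, ?_⟩
    · intro v a' b' h1 h2; rw [h1] at h2; exact Option.some_inj.1 h2
    · exact (munion_single_absorb (by simp [single_app])).symm

lemma mjoin_pair_absorbL {x y : Var} (hxy : x ≠ y) (c : Obj) (P : Obj → Prop) :
    mjoin {μ | ∃ b, μ = pairMap x c y b ∧ P b} {single x c}
      = {μ | ∃ b, μ = pairMap x c y b ∧ P b} := by
  ext μ
  simp only [mem_mjoin, Set.mem_setOf_eq, Set.mem_singleton_iff]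
  constructor
  · rintro ⟨μ1, ⟨b, rfl, hP⟩, μ2, rfl, hc, rfl⟩
    exact ⟨b, (munion_single_absorb (by simp [pairMap_app])), hP⟩
  · rintro ⟨b, rfl, hP⟩
    refine ⟨pairMap x c y b, ⟨b, rfl, hP⟩, single x c, rfl, ?_, ?_⟩
    · intro v a' b' h1 h2
      rw [pairMap_app] at h1; rw [single_app] at h2
      split_ifs at h1 h2 <;> simp_all
    · exact (munion_single_absorb (by simp [pairMap_app])).symm

lemma mjoin_single_single_distinct {m m' : Var} (h : m ≠ m') (P : Obj → Prop) (c : Obj) :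
    mjoin {μ | ∃ b, μ = single m' b ∧ P b} {single m c}
      = {μ | ∃ b, μ = pairMap m c m' b ∧ P b} := by
  ext μ
  simp only [mem_mjoin, Set.mem_setOf_eq, Set.mem_singleton_iff]
  constructor
  · rintro ⟨μ1, ⟨b, rfl, hP⟩, μ2, rfl, hc, rfl⟩
    refine ⟨b, ?_, hP⟩
    funext v
    simp only [munion_app, single_app, pairMap_app]
    split_ifs <;> simp_all [Option.or]
  · rintro ⟨b, rfl, hP⟩
    refine ⟨single m' b, ⟨b, rfl, hP⟩, single m c, rfl, ?_, ?_⟩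
    · intro v a' b' h1 h2
      rw [single_app] at h1 h2
      split_ifs at h1 h2 <;> simp_all
    · funext v
      simp only [munion_app, single_app, pairMap_app]
      split_ifs <;> simp_all [Option.or]

/-! ### Restriction lemmas -/

lemma restrict_pair_eq {μ : Mapping} {x y : Var} {a b : Obj} (hxy : x ≠ y)
    (hx : μ x = some a) (hy : μ y = some b) :
    restrictV {x, y} μ = pairMap x a y b := by
  funext v
  simp only [restrictV, pairMap_app, Finset.mem_insert, Finset.mem_singleton]
  split_ifs <;> simp_all

lemma restrict_single_eq {μ : Mapping} {y : Var} {b : Obj} (hy : μ y = some b) :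
    restrictV {y} μ = single y b := by
  funext v
  simp only [restrictV, single_app, Finset.mem_singleton]
  split_ifs <;> simp_all

lemma restrict_empty (μ : Mapping) : restrictV ∅ μ = emptyMap := by
  funext v; simp [restrictV, emptyMap]
/-! ### Facts about ppRel -/

def step (W : Web) (r : PP) (p q : URI) : Prop :=
  (W.adoc p).isSome ∧ ppRel W r (.uri p) (.uri q)

lemma ppRel_uri_iff {W : Web} {p : URI} {a b : Obj} :
    ppRel W (.uri p) a b ↔
      ∃ u d, a = .uri u ∧ W.adoc u = some d ∧ (⟨.uri u, p, b⟩ : RDFTriple) ∈ W.data d := by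
  constructor
  · rintro ⟨s, hs, u, d, rfl, hd, hmem, hsu⟩
    simp only at hsu
    subst hsu
    rw [objToSubj_eq_some] at hs
    exact ⟨u, d, rfl, hd, hmem⟩
  · rintro ⟨u, d, rfl, hd, hmem⟩
    exact ⟨.uri u, rfl, u, d, rfl, hd, hmem, rfl⟩

lemma ppRel_neg_iff {W : Web} {us : List URI} {a b : Obj} :
    ppRel W (.neg us) a b ↔
      ∃ u d q, a = .uri u ∧ W.adoc u = some d ∧ q ∉ us ∧
        (⟨.uri u, q, b⟩ : RDFTriple) ∈ W.data d := by
  constructor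
  · rintro ⟨q, hq, s, hs, u, d, rfl, hd, hmem, hsu⟩
    simp only at hsu
    subst hsu
    rw [objToSubj_eq_some] at hs
    exact ⟨u, d, q, rfl, hd, hq, hmem⟩
  · rintro ⟨u, d, q, rfl, hd, hq, hmem⟩
    exact ⟨q, hq, .uri u, rfl, u, d, rfl, hd, hmem, rfl⟩

lemma ppRel_src {W : Web} {r : PP} :
    ∀ {a b : Obj}, ppRel W r a b → a ≠ b → ∃ u, a = .uri u ∧ (W.adoc u).isSome := by
  induction r with
  | uri p =>
    intro a b h _
    rw [ppRel_uri_iff] at h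
    obtain ⟨u, d, rfl, hd, _⟩ := h
    exact ⟨u, rfl, by simp [hd]⟩
  | neg us =>
    intro a b h _
    rw [ppRel_neg_iff] at h
    obtain ⟨u, d, q, rfl, hd, _, _⟩ := h
    exact ⟨u, rfl, by simp [hd]⟩
  | seq r1 r2 ih1 ih2 =>
    rintro a b ⟨m, h1, h2⟩ hne
    by_cases ham : a = m
    · subst ham; exact ih2 h2 hne
    · exact ih1 h1 ham
  | alt r1 r2 ih1 ih2 =>
    rintro a b (h | h) hne
    · exact ih1 h hne
    · exact ih2 h hne
  | star r ih =>
    rintro a b (⟨rfl, _⟩ | htg) hne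
    · exact absurd rfl hne
    · induction htg using Relation.TransGen.head_induction_on with
      | single h' => exact ih h' hne
      | head h' htg' ihh =>
        rename_i a' c
        by_cases hac : a' = c
        · subst hac
          by_cases hcb : a' = b
          · exact absurd hcb hne
          · exact ihh hcb
        · exact ih h' hac

lemma ppRel_terms {W : Web} {r : PP} :
    ∀ {a b : Obj}, ppRel W r a b → a ∈ termsW W ∧ b ∈ termsW W := by
  have atom : ∀ (u : URI) (d : Doc) (q : URI) (b : Obj), W.adoc u = some d →
      (⟨.uri u, q, b⟩ : RDFTriple) ∈ W.data d → (Obj.uri u) ∈ termsW W ∧ b ∈ termsW W := by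
    intro u d q b hd hmem
    have hdoc : d ∈ W.docs := W.adoc_mem u d hd
    constructor
    · exact ⟨d, hdoc, ⟨.uri u, q, b⟩, hmem, Or.inl rfl⟩
    · exact ⟨d, hdoc, ⟨.uri u, q, b⟩, hmem, Or.inr (Or.inr rfl)⟩
  induction r with
  | uri p =>
    intro a b h
    rw [ppRel_uri_iff] at h
    obtain ⟨u, d, rfl, hd, hmem⟩ := h
    exact atom u d p b hd hmem
  | neg us =>
    intro a b h
    rw [ppRel_neg_iff] at h
    obtain ⟨u, d, q, rfl, hd, _, hmem⟩ := h
    exact atom u d q b hd hmem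
  | seq r1 r2 ih1 ih2 =>
    rintro a b ⟨m, h1, h2⟩
    exact ⟨(ih1 h1).1, (ih2 h2).2⟩
  | alt r1 r2 ih1 ih2 =>
    rintro a b (h | h)
    · exact ih1 h
    · exact ih2 h
  | star r ih =>
    rintro a b (⟨rfl, h⟩ | htg)
    · exact ⟨h, h⟩
    · constructor
      · rcases (Relation.TransGen.head'_iff.1 htg) with ⟨c, h1, _⟩
        exact (ih h1).1
      · induction htg with
        | single h1 => exact (ih h1).2
        | tail _ h2 _ => exact (ih h2).2

lemma transGen_decomp {W : Web} {r : PP} {a b : Obj} :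
    Relation.TransGen (ppRel W r) a b ↔
      ppRel W r a b ∨ ∃ u u', (W.adoc u).isSome ∧ (W.adoc u').isSome ∧
        ppRel W r a (.uri u) ∧ Relation.ReflTransGen (step W r) u u' ∧
        ppRel W r (.uri u') b := by
  constructor
  · intro h
    induction h with
    | single h1 => exact Or.inl h1
    | tail h1 h2 ih =>
      rename_i c b'
      rcases ih with hac | ⟨u, u', hu, hu', hstart, hchain, hlast⟩
      · by_cases hc : ∃ w, c = .uri w ∧ (W.adoc w).isSome
        · obtain ⟨w, rfl, hw⟩ := hc
          exact Or.inr ⟨w, w, hw, hw, hac, Relation.ReflTransGen.refl, h2⟩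
        · have : c = b' := by
            by_contra hne
            exact hc (ppRel_src h2 hne)
          subst this
          exact Or.inl hac
      · by_cases hc : ∃ w, c = .uri w ∧ (W.adoc w).isSome
        · obtain ⟨w, rfl, hw⟩ := hc
          exact Or.inr ⟨u, w, hu, hw, hstart, hchain.tail ⟨hu', hlast⟩, h2⟩
        · have : c = b' := by
            by_contra hne
            exact hc (ppRel_src h2 hne)
          subst this
          exact Or.inr ⟨u, u', hu, hu', hstart, hchain, hlast⟩
  · have hmono : ∀ {p q : URI}, Relation.ReflTransGen (step W r) p q →
        Relation.ReflTransGen (ppRel W r) (.uri p) (.uri q) := by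
      intro p q h
      induction h with
      | refl => exact Relation.ReflTransGen.refl
      | tail _ h2 ih => exact ih.tail h2.2
    rintro (h | ⟨u, u', _, _, hstart, hchain, hlast⟩)
    · exact Relation.TransGen.single h
    · exact (Relation.TransGen.head' hstart (hmono hchain)).tail hlast

lemma termsW_iff {W : Web} {a : Obj} :
    a ∈ termsW W ↔ ∃ u d, W.adoc u = some d ∧ ∃ t ∈ W.data d,
      (a = t.s.toObj ∨ a = .uri t.p ∨ a = t.o) := by
  constructor
  · rintro ⟨d, hd, t, ht, hpos⟩
    obtain ⟨u, hu⟩ := W.adoc_surj d hd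
    exact ⟨u, d, hu, t, ht, hpos⟩
  · rintro ⟨u, d, hu, t, ht, hpos⟩
    exact ⟨d, W.adoc_mem u d hu, t, ht, hpos⟩
/-! ### Dataset and graph pattern computations -/

lemma datasetW_named_eq_some {W : Web} {U : Set URI} {u : URI} {G : Set RDFTriple} :
    (datasetW W U).named u = some G ↔
      u ∈ U ∧ ∃ d, W.adoc u = some d ∧ G = ↑(W.data d) := by
  unfold datasetW
  simp only
  split_ifs with h
  · simp only [Option.map_eq_some_iff]
    constructor
    · rintro ⟨d, hd, rfl⟩; exact ⟨h, d, hd, rfl⟩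
    · rintro ⟨_, d, hd, rfl⟩; exact ⟨d, hd, rfl⟩
  · simp [h]

lemma datasetW_dflt {W : Web} {U : Set URI} :
    (datasetW W U).dflt = {t | ∃ u ∈ U, ∃ d, W.adoc u = some d ∧ t ∈ W.data d} := rfl

lemma mem_evalL_eps {W : Web} {u u' : URI} :
    u' ∈ evalL W .eps u ↔ (W.adoc u).isSome ∧ u' = u := by
  simp only [evalL]
  split_ifs with h <;> simp [h]

lemma seedSet_eps (W : Web) (S : Set URI) :
    {u' | ∃ u ∈ S, u' ∈ evalL W .eps u} = {u | u ∈ S ∧ (W.adoc u).isSome} := by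
  ext u'
  simp only [Set.mem_setOf_eq, mem_evalL_eps]
  constructor
  · rintro ⟨u, hu, h1, rfl⟩; exact ⟨hu, h1⟩
  · rintro ⟨hu, h1⟩; exact ⟨u', hu, h1, rfl⟩

lemma evalQ_base_eps (W : Web) (S : Set URI) (P : GP) :
    evalQ W (.base .eps P) S =
      evalGP (datasetW W {u | u ∈ S ∧ (W.adoc u).isSome}) P
        (datasetW W {u | u ∈ S ∧ (W.adoc u).isSome}).dflt := by
  simp only [evalQ]
  rw [seedSet_eps]

lemma nat_ne_add (x y k : ℕ) (hk : 0 < k) : x ≠ x + y + k := by omega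
lemma nat_ne_add' (x y k : ℕ) (hk : 0 < k) : y ≠ x + y + k := by omega
lemma nat_add_ne (x y i j : ℕ) (hij : i ≠ j) : x + y + i ≠ x + y + j := by omega
lemma nat_ne_succ (y k : ℕ) (hk : 0 < k) : y ≠ y + k := by omega
lemma nat_succ_ne (y i j : ℕ) (hij : i ≠ j) : y + i ≠ y + j := by omega

lemma toObj_eq_uri {s : Subj} {u : URI} : s.toObj = .uri u ↔ s = .uri u := by
  cases s <;> simp [Subj.toObj]

lemma varsOf_vtv (x : Var) (o : Obj) (y : Var) :
    (⟨.var x, .term o, .var y⟩ : TriplePattern).varsOf = {x, y} := by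
  ext w; simp [TriplePattern.varsOf, PTerm.varsOf]; tauto

lemma varsOf_vvv (x z y : Var) :
    (⟨.var x, .var z, .var y⟩ : TriplePattern).varsOf = {x, z, y} := by
  ext w; simp [TriplePattern.varsOf, PTerm.varsOf]; tauto

lemma evalGP_graphV_tp {W : Web} {U : Set URI} {G : Set RDFTriple} {s v : Var}
    (hsv : s ≠ v) (p : URI) :
    evalGP (datasetW W U) (.graphV s (.tp ⟨.var s, .term (.uri p), .var v⟩)) G
      = {μ | ∃ u d b, u ∈ U ∧ W.adoc u = some d ∧
          (⟨.uri u, p, b⟩ : RDFTriple) ∈ W.data d ∧ μ = pairMap s (.uri u) v b} := by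
  ext μ
  simp only [evalGP, Set.mem_setOf_eq]
  constructor
  · rintro ⟨u, G', hnamed, μ', ⟨hdom, tr, htr, hinst⟩, hcompat, rfl⟩
    rw [datasetW_named_eq_some] at hnamed
    obtain ⟨hU, d, hd, rfl⟩ := hnamed
    rw [tpInst_eq_some] at hinst
    obtain ⟨h1, h2, h3⟩ := hinst
    simp only [pval, Option.some.injEq, Obj.uri.injEq] at h1 h2 h3
    have hsu : tr.s.toObj = .uri u := hcompat s _ _ h1 (by simp [single_app])
    rw [toObj_eq_uri] at hsu
    have hmem : (⟨.uri u, p, tr.o⟩ : RDFTriple) ∈ W.data d := by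
      have heq : tr = ⟨.uri u, p, tr.o⟩ := by
        cases tr; simp_all
      rw [← heq]
      exact Finset.mem_coe.1 htr
    have hμeq : μ' = pairMap s (.uri u) v tr.o := by
      apply eq_pairMap hsv
      · rw [hdom, varsOf_vtv]
      · rw [h1, hsu]; rfl
      · exact h3
    refine ⟨u, d, tr.o, hU, hd, hmem, ?_⟩
    rw [hμeq, munion_single_absorb (by simp [pairMap_app])]
  · rintro ⟨u, d, b, hU, hd, hmem, rfl⟩
    refine ⟨u, ↑(W.data d), datasetW_named_eq_some.2 ⟨hU, d, hd, rfl⟩,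
      pairMap s (.uri u) v b, ⟨?_, ⟨.uri u, p, b⟩, Finset.mem_coe.2 hmem, ?_⟩, ?_, ?_⟩
    · rw [mdom_pairMap hsv, varsOf_vtv]
    · rw [tpInst_eq_some]
      exact ⟨by simp [pval, pairMap_app, Subj.toObj], rfl,
        by simp [pval, pairMap_app, hsv.symm]⟩
    · intro v' a' b' h1 h2
      rw [single_app] at h2
      split_ifs at h2 with hv
      · subst hv
        rw [pairMap_app] at h1
        simp_all
    · exact (munion_single_absorb (by simp [pairMap_app])).symm

def negCond (z : Var) (us : List URI) : Cond :=
  us.foldr (fun u c => .and (.neq (.var z) (.term (.uri u))) c) (.eq (.var z) (.var z))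

lemma condHolds_neq_const {μ : Mapping} {z : Var} {o : Obj} :
    condHolds μ (.neq (.var z) (.term o)) ↔ ∃ a, μ z = some a ∧ a ≠ o := by
  show (∃ x y, μ z = some x ∧ some o = some y ∧ x ≠ y) ↔ _
  constructor
  · rintro ⟨x, y, hx, hy, hne⟩
    obtain rfl := Option.some_inj.1 hy
    exact ⟨x, hx, hne⟩
  · rintro ⟨a, ha, hne⟩
    exact ⟨a, o, ha, rfl, hne⟩

lemma condHolds_negCond {μ : Mapping} {z : Var} {us : List URI} :
    condHolds μ (negCond z us) ↔ ∃ q, μ z = some q ∧ ∀ u ∈ us, q ≠ .uri u := by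
  induction us with
  | nil =>
    show (∃ x, μ z = some x ∧ μ z = some x) ↔ _
    simp
  | cons u us ih =>
    have hshow : condHolds μ (negCond z (u :: us)) ↔
        condHolds μ (.neq (.var z) (.term (.uri u))) ∧ condHolds μ (negCond z us) := Iff.rfl
    rw [hshow, ih, condHolds_neq_const]
    constructor
    · rintro ⟨⟨a, ha, hne⟩, q, hq, hall⟩
      rw [ha] at hq
      obtain rfl := Option.some_inj.1 hq
      refine ⟨a, ha, ?_⟩
      intro u' hu'
      rcases List.mem_cons.1 hu' with rfl | hu
      · exact hne
      · exact hall u' hu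
    · rintro ⟨q, hq, hall⟩
      exact ⟨⟨q, hq, hall u (List.mem_cons_self (a := u) (l := us))⟩, q, hq,
        fun u' hu => hall u' (List.mem_cons_of_mem u hu)⟩

lemma evalGP_graphV_negtp {W : Web} {U : Set URI} {G : Set RDFTriple} {s z v : Var}
    (hsz : s ≠ z) (hsv : s ≠ v) (hzv : z ≠ v) (us : List URI) :
    evalGP (datasetW W U) (.graphV s (.filter (.tp ⟨.var s, .var z, .var v⟩) (negCond z us))) G
      = {μ | ∃ u d q b, u ∈ U ∧ W.adoc u = some d ∧ q ∉ us ∧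
          (⟨.uri u, q, b⟩ : RDFTriple) ∈ W.data d ∧ μ = mk3 s (.uri u) z (.uri q) v b} := by
  ext μ
  simp only [evalGP, Set.mem_setOf_eq]
  constructor
  · rintro ⟨u, G', hnamed, μ', ⟨⟨hdom, tr, htr, hinst⟩, hcond⟩, hcompat, rfl⟩
    rw [datasetW_named_eq_some] at hnamed
    obtain ⟨hU, d, hd, rfl⟩ := hnamed
    rw [tpInst_eq_some] at hinst
    obtain ⟨h1, h2, h3⟩ := hinst
    simp only [pval] at h1 h2 h3
    have hsu : tr.s.toObj = .uri u := hcompat s _ _ h1 (by simp [single_app])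
    rw [toObj_eq_uri] at hsu
    rw [condHolds_negCond] at hcond
    obtain ⟨q, hq, hqne⟩ := hcond
    rw [h2] at hq
    obtain rfl := Option.some_inj.1 hq
    have hqn : tr.p ∉ us := fun hmem => hqne tr.p hmem rfl
    have hmem : (⟨.uri u, tr.p, tr.o⟩ : RDFTriple) ∈ W.data d := by
      have heq : tr = ⟨.uri u, tr.p, tr.o⟩ := by cases tr; simp_all
      rw [← heq]; exact Finset.mem_coe.1 htr
    have hμeq : μ' = mk3 s (.uri u) z (.uri tr.p) v tr.o := by
      apply eq_mk3
      · rw [hdom, varsOf_vvv]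
      · rw [h1, hsu]; rfl
      · exact h2
      · exact h3
    refine ⟨u, d, tr.p, tr.o, hU, hd, hqn, hmem, ?_⟩
    rw [hμeq, munion_single_absorb (by simp [mk3_app])]
  · rintro ⟨u, d, q, b, hU, hd, hqn, hmem, rfl⟩
    refine ⟨u, ↑(W.data d), datasetW_named_eq_some.2 ⟨hU, d, hd, rfl⟩,
      mk3 s (.uri u) z (.uri q) v b,
      ⟨⟨?_, ⟨.uri u, q, b⟩, Finset.mem_coe.2 hmem, ?_⟩, ?_⟩, ?_, ?_⟩
    · rw [mdom_mk3 hsz hsv hzv, varsOf_vvv]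
    · rw [tpInst_eq_some]
      refine ⟨?_, ?_, ?_⟩
      · simp [pval, mk3_app, Subj.toObj]
      · simp [pval, mk3_app, hsz.symm]
      · simp [pval, mk3_app, hsv.symm, hzv.symm]
    · rw [condHolds_negCond]
      refine ⟨.uri q, by simp [mk3_app, hsz.symm], ?_⟩
      intro u' hu' heq
      rw [Obj.uri.injEq] at heq
      subst heq
      exact hqn hu'
    · intro v' a' b' h1 h2
      rw [single_app] at h2
      split_ifs at h2 with hv
      · subst hv
        rw [mk3_app] at h1
        simp_all
    · exact (munion_single_absorb (by simp [mk3_app])).symm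

lemma evalGP_graphV_empty {W : Web} {U : Set URI} {G : Set RDFTriple} (y : Var) :
    evalGP (datasetW W U) (.graphV y .empty) G
      = {μ | ∃ u, u ∈ U ∧ (W.adoc u).isSome ∧ μ = single y (.uri u)} := by
  ext μ
  simp only [evalGP, Set.mem_setOf_eq, Set.mem_singleton_iff]
  constructor
  · rintro ⟨u, G', hnamed, μ', hμ', hcompat, rfl⟩
    rw [datasetW_named_eq_some] at hnamed
    obtain ⟨hU, d, hd, rfl⟩ := hnamed
    rw [hμ', munion_empty_left]
    exact ⟨u, hU, by simp [hd], rfl⟩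
  · rintro ⟨u, hU, hsome, rfl⟩
    obtain ⟨d, hd⟩ := Option.isSome_iff_exists.1 hsome
    refine ⟨u, ↑(W.data d), datasetW_named_eq_some.2 ⟨hU, d, hd, rfl⟩, emptyMap, rfl, ?_, ?_⟩
    · intro v a b h1 _
      exact absurd h1 (by simp [emptyMap])
    · exact (munion_empty_left _).symm
/-! ### Term-collecting queries -/

def termGP (t c1 c2 : Var) : GP :=
  .union (.tp ⟨.var t, .var c1, .var c2⟩)
    (.union (.tp ⟨.var c1, .var t, .var c2⟩) (.tp ⟨.var c1, .var c2, .var t⟩))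

lemma mem_evalGP_tp' {D : RDFDataset} {G : Set RDFTriple} {x z y : Var} {μ : Mapping}
    (hxz : x ≠ z) (hxy : x ≠ y) (hzy : z ≠ y) :
    μ ∈ evalGP D (.tp ⟨.var x, .var z, .var y⟩) G ↔
      ∃ tr ∈ G, μ = mk3 x tr.s.toObj z (.uri tr.p) y tr.o := by
  simp only [evalGP, Set.mem_setOf_eq]
  constructor
  · rintro ⟨hdom, tr, htr, hinst⟩
    rw [tpInst_eq_some] at hinst
    obtain ⟨h1, h2, h3⟩ := hinst
    simp only [pval] at h1 h2 h3
    refine ⟨tr, htr, eq_mk3 ?_ h1 h2 h3⟩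
    rw [hdom, varsOf_vvv]
  · rintro ⟨tr, htr, rfl⟩
    refine ⟨by rw [mdom_mk3 hxz hxy hzy, varsOf_vvv], tr, htr, ?_⟩
    rw [tpInst_eq_some]
    refine ⟨?_, ?_, ?_⟩
    · simp [pval, mk3_app]
    · simp [pval, mk3_app, hxz.symm]
    · simp [pval, mk3_app, hxy.symm, hzy.symm]

lemma mem_evalGP_termGP {D : RDFDataset} {G : Set RDFTriple} {t c1 c2 : Var} {μ : Mapping}
    (h1 : t ≠ c1) (h2 : t ≠ c2) (h3 : c1 ≠ c2) :
    μ ∈ evalGP D (termGP t c1 c2) G ↔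
      ∃ tr ∈ G, μ = mk3 t tr.s.toObj c1 (.uri tr.p) c2 tr.o ∨
                μ = mk3 c1 tr.s.toObj t (.uri tr.p) c2 tr.o ∨
                μ = mk3 c1 tr.s.toObj c2 (.uri tr.p) t tr.o := by
  show μ ∈ evalGP D (.tp _) G ∪ (evalGP D (.tp _) G ∪ evalGP D (.tp _) G) ↔ _
  simp only [Set.mem_union]
  rw [mem_evalGP_tp' h1 h2 h3, mem_evalGP_tp' h1.symm h3 h2,
    mem_evalGP_tp' h3 h1.symm h2.symm]
  constructor
  · rintro (⟨tr, htr, he⟩ | ⟨tr, htr, he⟩ | ⟨tr, htr, he⟩)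
    · exact ⟨tr, htr, Or.inl he⟩
    · exact ⟨tr, htr, Or.inr (Or.inl he)⟩
    · exact ⟨tr, htr, Or.inr (Or.inr he)⟩
  · rintro ⟨tr, htr, (he | he | he)⟩
    · exact Or.inl ⟨tr, htr, he⟩
    · exact Or.inr (Or.inl ⟨tr, htr, he⟩)
    · exact Or.inr (Or.inr ⟨tr, htr, he⟩)

def qId (x y : Var) : LDQL :=
  .proj {x, y} (.seedV (x+y+1) (.base .eps
    (.filter (.and (termGP x (x+y+2) (x+y+3)) (termGP y (x+y+4) (x+y+5)))
      (.eq (.var x) (.var y)))))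

lemma condHolds_eq_vars {μ : Mapping} {x y : Var} :
    condHolds μ (.eq (.var x) (.var y)) ↔ ∃ o, μ x = some o ∧ μ y = some o := Iff.rfl

set_option maxHeartbeats 1000000 in
lemma qId_spec {x y : Var} (hxy : x ≠ y) (W : Web) (S : Set URI) :
    evalQ W (qId x y) S = {μ | ∃ a, μ = pairMap x a y a ∧ a ∈ termsW W} := by
  have hx1 : x ≠ x+y+1 := nat_ne_add x y 1 Nat.one_pos
  have hx2 : x ≠ x+y+2 := nat_ne_add x y 2 (by exact Nat.succ_pos 1)
  have hx3 : x ≠ x+y+3 := nat_ne_add x y 3 (Nat.succ_pos 2)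
  have hx4 : x ≠ x+y+4 := nat_ne_add x y 4 (Nat.succ_pos 3)
  have hx5 : x ≠ x+y+5 := nat_ne_add x y 5 (Nat.succ_pos 4)
  have hy1 : y ≠ x+y+1 := nat_ne_add' x y 1 Nat.one_pos
  have hy2 : y ≠ x+y+2 := nat_ne_add' x y 2 (Nat.succ_pos 1)
  have hy3 : y ≠ x+y+3 := nat_ne_add' x y 3 (Nat.succ_pos 2)
  have hy4 : y ≠ x+y+4 := nat_ne_add' x y 4 (Nat.succ_pos 3)
  have hy5 : y ≠ x+y+5 := nat_ne_add' x y 5 (Nat.succ_pos 4)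
  have h23 : (x+y+2 : ℕ) ≠ x+y+3 := nat_add_ne x y 2 3 (by decide)
  have h45 : (x+y+4 : ℕ) ≠ x+y+5 := nat_add_ne x y 4 5 (by decide)
  have h24 : (x+y+2 : ℕ) ≠ x+y+4 := nat_add_ne x y 2 4 (by decide)
  have h25 : (x+y+2 : ℕ) ≠ x+y+5 := nat_add_ne x y 2 5 (by decide)
  have h34 : (x+y+3 : ℕ) ≠ x+y+4 := nat_add_ne x y 3 4 (by decide)
  have h35 : (x+y+3 : ℕ) ≠ x+y+5 := nat_add_ne x y 3 5 (by decide)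
  have h12 : (x+y+1 : ℕ) ≠ x+y+2 := nat_add_ne x y 1 2 (by decide)
  have h13 : (x+y+1 : ℕ) ≠ x+y+3 := nat_add_ne x y 1 3 (by decide)
  have h14 : (x+y+1 : ℕ) ≠ x+y+4 := nat_add_ne x y 1 4 (by decide)
  have h15 : (x+y+1 : ℕ) ≠ x+y+5 := nat_add_ne x y 1 5 (by decide)
  ext μ
  show μ ∈ restrictV {x, y} '' (evalQ W _ S) ↔ _
  simp only [evalQ, seedSet_eps, Set.mem_image, Set.mem_iUnion, Set.mem_setOf_eq]
  constructor
  · rintro ⟨ν, ⟨u, hν⟩, rfl⟩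
    rw [mem_mjoin] at hν
    obtain ⟨μ', hμ', μ2, hμ2, hcompat, rfl⟩ := hν
    rw [Set.mem_singleton_iff] at hμ2
    subst hμ2
    have hμ'' : μ' ∈ evalGP _ (.filter (.and _ _) (.eq (.var x) (.var y))) _ := hμ'
    obtain ⟨hand, hcond⟩ := hμ''
    obtain ⟨μa, hμa, μb, hμb, hcab, rfl⟩ := hand
    rw [condHolds_eq_vars] at hcond
    obtain ⟨o, hox, hoy⟩ := hcond
    refine ⟨o, ?_, ?_⟩
    · apply restrict_pair_eq hxy
      · rw [munion_app, hox]; rfl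
      · rw [munion_app, hoy]; rfl
    · -- o occurs in a triple of the dataset
      rw [mem_evalGP_termGP hx2 hx3 h23] at hμa
      obtain ⟨tr, htr, hshape⟩ := hμa
      rw [datasetW_dflt] at htr
      obtain ⟨u0, ⟨_, _⟩, d, hd, htrd⟩ := htr
      have hoval : o = tr.s.toObj ∨ o = .uri tr.p ∨ o = tr.o := by
        have hax : μa x ≠ none → munion μa μb x = μa x := by
          intro h; rw [munion_app]
          cases h' : μa x
          · exact absurd h' h
          · rfl
        rcases hshape with rfl | rfl | rfl
        · have hthis := hax (by simp [mk3_app])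
          rw [hthis, mk3_app] at hox
          rw [if_pos rfl] at hox
          exact Or.inl (Option.some_inj.1 hox).symm
        · have hthis := hax (by simp [mk3_app, hx2])
          rw [hthis, mk3_app] at hox
          rw [if_neg hx2, if_pos rfl] at hox
          exact Or.inr (Or.inl (Option.some_inj.1 hox).symm)
        · have hthis := hax (by simp [mk3_app, hx2, hx3])
          rw [hthis, mk3_app] at hox
          rw [if_neg hx2, if_neg hx3, if_pos rfl] at hox
          exact Or.inr (Or.inr (Option.some_inj.1 hox).symm)
      exact termsW_iff.2 ⟨u0, d, hd, tr, htrd, hoval⟩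
  · rintro ⟨a, rfl, ha⟩
    rw [termsW_iff] at ha
    obtain ⟨u, d, hd, tr, htr, hpos⟩ := ha
    -- build the witnesses
    have hdfl : tr ∈ (datasetW W {u0 | u0 ∈ ({u} : Set URI) ∧ (W.adoc u0).isSome}).dflt := by
      rw [datasetW_dflt]
      exact ⟨u, ⟨rfl, by simp [hd]⟩, d, hd, htr⟩
    set μa : Mapping :=
      (if a = tr.s.toObj then mk3 x tr.s.toObj (x+y+2) (.uri tr.p) (x+y+3) tr.o
          else if a = .uri tr.p then mk3 (x+y+2) tr.s.toObj x (.uri tr.p) (x+y+3) tr.o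
          else mk3 (x+y+2) tr.s.toObj (x+y+3) (.uri tr.p) x tr.o) with hμa_def
    have hμa_mem : μa ∈ evalGP (datasetW W {u0 | u0 ∈ ({u} : Set URI) ∧ (W.adoc u0).isSome})
        (termGP x (x+y+2) (x+y+3)) (datasetW W {u0 | u0 ∈ ({u} : Set URI) ∧ (W.adoc u0).isSome}).dflt := by
      rw [mem_evalGP_termGP hx2 hx3 h23]
      refine ⟨tr, hdfl, ?_⟩
      rw [hμa_def]
      split_ifs <;> tauto
    have hμax : μa x = some a := by
      rw [hμa_def]
      split_ifs with hp1 hp2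
      · rw [mk3_app, if_pos rfl, hp1]
      · rw [mk3_app, if_neg hx2, if_pos rfl, hp2]
      · rw [mk3_app, if_neg hx2, if_neg hx3, if_pos rfl]
        rcases hpos with h | h | h
        · exact absurd h hp1
        · exact absurd h hp2
        · rw [h]
    have hμa_dom : ∀ v, μa v ≠ none → (v = x ∨ v = x+y+2 ∨ v = x+y+3) := by
      intro v hv
      rw [hμa_def] at hv
      split_ifs at hv <;> rw [mk3_app] at hv <;> split_ifs at hv <;> tauto
    set μb : Mapping := (if a = tr.s.toObj then mk3 y tr.s.toObj (x+y+4) (.uri tr.p) (x+y+5) tr.o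
          else if a = .uri tr.p then mk3 (x+y+4) tr.s.toObj y (.uri tr.p) (x+y+5) tr.o
          else mk3 (x+y+4) tr.s.toObj (x+y+5) (.uri tr.p) y tr.o) with hμb_def
    have hμb_mem : μb ∈ evalGP (datasetW W {u0 | u0 ∈ ({u} : Set URI) ∧ (W.adoc u0).isSome})
        (termGP y (x+y+4) (x+y+5)) (datasetW W {u0 | u0 ∈ ({u} : Set URI) ∧ (W.adoc u0).isSome}).dflt := by
      rw [mem_evalGP_termGP hy4 hy5 h45]
      refine ⟨tr, hdfl, ?_⟩
      rw [hμb_def]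
      split_ifs <;> tauto
    have hμby : μb y = some a := by
      rw [hμb_def]
      split_ifs with hp1 hp2
      · rw [mk3_app, if_pos rfl, hp1]
      · rw [mk3_app, if_neg hy4, if_pos rfl, hp2]
      · rw [mk3_app, if_neg hy4, if_neg hy5, if_pos rfl]
        rcases hpos with h | h | h
        · exact absurd h hp1
        · exact absurd h hp2
        · rw [h]
    have hμb_dom : ∀ v, μb v ≠ none → (v = y ∨ v = x+y+4 ∨ v = x+y+5) := by
      intro v hv
      rw [hμb_def] at hv
      split_ifs at hv <;> rw [mk3_app] at hv <;> split_ifs at hv <;> tauto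
    have hcab : compatible μa μb := by
      intro v a' b' hva hvb
      have hA := hμa_dom v (by simp [hva])
      have hB := hμb_dom v (by simp [hvb])
      rcases hA with rfl | rfl | rfl <;> rcases hB with h | h | h <;>
        first
          | exact absurd h hxy
          | exact absurd h hx4
          | exact absurd h hx5
          | exact absurd h.symm hy2
          | exact absurd h.symm hy3
          | exact absurd h h24
          | exact absurd h h25
          | exact absurd h h34
          | exact absurd h h35
    set μ' : Mapping := munion μa μb with hμ'_def
    have hμ'w : μ' (x+y+1) = none := by
      rw [hμ'_def, munion_app]
      have ha' : μa (x+y+1) = none := by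
        by_contra h
        rcases hμa_dom _ h with h' | h' | h'
        · exact absurd h'.symm hx1
        · exact absurd h' h12
        · exact absurd h' h13
      have hb' : μb (x+y+1) = none := by
        by_contra h
        rcases hμb_dom _ h with h' | h' | h'
        · exact absurd h'.symm hy1
        · exact absurd h' h14
        · exact absurd h' h15
      rw [ha', hb']; rfl
    refine ⟨munion μ' (single (x+y+1) (.uri u)), ⟨u, ?_⟩, ?_⟩
    · rw [mem_mjoin]
      refine ⟨μ', ?_, single (x+y+1) (.uri u), rfl, ?_, rfl⟩
      · show μ' ∈ evalGP _ (.filter (.and _ _) _) _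
        refine ⟨⟨μa, hμa_mem, μb, hμb_mem, hcab, rfl⟩, ?_⟩
        rw [condHolds_eq_vars]
        refine ⟨a, ?_, ?_⟩
        · rw [hμ'_def, munion_app, hμax]; rfl
        · rw [hμ'_def, munion_app, hμby]
          cases h' : μa y
          · rfl
          · rcases hμa_dom y (by simp [h']) with h'' | h'' | h''
            · exact absurd h''.symm hxy
            · exact absurd h'' hy2
            · exact absurd h'' hy3
      · intro v a' b' hva hvb
        rw [single_app] at hvb
        split_ifs at hvb with hv
        · subst hv
          rw [hμ'w] at hva
          exact absurd hva (by simp)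
    · apply restrict_pair_eq hxy
      · rw [munion_app, hμ'_def, munion_app, hμax]; rfl
      · rw [munion_app, hμ'_def, munion_app]
        have h' : μa y = none := by
          by_contra h
          rcases hμa_dom y h with h'' | h'' | h''
          · exact absurd h''.symm hxy
          · exact absurd h'' hy2
          · exact absurd h'' hy3
        rw [h', hμby]; rfl

def qTerms (y : Var) : LDQL := .proj {y} (qId y (y+1))

lemma qTerms_spec (y : Var) (W : Web) (S : Set URI) :
    evalQ W (qTerms y) S = {μ | ∃ a, μ = single y a ∧ a ∈ termsW W} := by
  have hy1 : y ≠ y + 1 := nat_ne_succ y 1 Nat.one_pos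
  show restrictV {y} '' (evalQ W (qId y (y+1)) S) = _
  rw [qId_spec hy1]
  ext μ
  simp only [Set.mem_image, Set.mem_setOf_eq]
  constructor
  · rintro ⟨ν, ⟨a, rfl, ha⟩, rfl⟩
    exact ⟨a, restrict_single_eq (by simp [pairMap_app]), ha⟩
  · rintro ⟨a, rfl, ha⟩
    exact ⟨pairMap y a (y+1) a, ⟨a, rfl, ha⟩,
      restrict_single_eq (by simp [pairMap_app])⟩

def qConst (w : Var) (c : Obj) : LDQL := .base .eps (.bind .empty c w)

lemma qConst_spec (w : Var) (c : Obj) (W : Web) (S : Set URI) :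
    evalQ W (qConst w c) S = {single w c} := by
  rw [qConst, evalQ_base_eps]
  ext μ
  show μ ∈ evalGP _ (.bind .empty c w) _ ↔ _
  simp only [evalGP, Set.mem_setOf_eq, Set.mem_singleton_iff]
  constructor
  · rintro ⟨ν, hν, hw, rfl⟩
    have hν' : ν = emptyMap := hν
    subst hν'
    rw [munion_empty_left]
  · rintro rfl
    exact ⟨emptyMap, rfl, rfl, (munion_empty_left _).symm⟩
/-! ### The chain (link) query -/

lemma evalL_sub_spec {W : Web} {r : PP} {m' : Var} (qc : LDQL)
    (hqc : ∀ u, evalQ W qc {u}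
      = {μ | ∃ b, μ = single m' b ∧ (W.adoc u).isSome ∧ ppRel W r (.uri u) b}) (u0 : URI) :
    evalL W (.sub m' qc) u0 = {u' | step W r u0 u'} := by
  ext u'
  simp only [evalL, Set.mem_setOf_eq]
  rw [hqc u0]
  constructor
  · rintro ⟨hs, μ, ⟨b, rfl, hs', hrel⟩, hval⟩
    have hb : b = .uri u' := by
      rw [single_app, if_pos rfl] at hval
      exact Option.some_inj.1 hval
    subst hb
    exact ⟨hs, hrel⟩
  · rintro ⟨hs, hrel⟩
    exact ⟨hs, single m' (.uri u'), ⟨.uri u', rfl, hs, hrel⟩, by rw [single_app, if_pos rfl]⟩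

lemma evalL_star_sub_spec {W : Web} {r : PP} {m' : Var} (qc : LDQL)
    (hqc : ∀ u, evalQ W qc {u}
      = {μ | ∃ b, μ = single m' b ∧ (W.adoc u).isSome ∧ ppRel W r (.uri u) b}) (u : URI) :
    evalL W (.star (.sub m' qc)) u
      = {u' | (W.adoc u).isSome ∧ Relation.ReflTransGen (step W r) u u'} := by
  have hrel : (fun a b => b ∈ evalL W (.sub m' qc) a) = step W r := by
    funext a b
    rw [evalL_sub_spec qc hqc a]
    rfl
  conv_lhs => rw [evalL]
  rw [hrel]

lemma link_spec {W : Web} {r : PP} {m m' : Var} (hmm : m ≠ m') (qc : LDQL)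
    (hqc : ∀ u, evalQ W qc {u}
      = {μ | ∃ b, μ = single m' b ∧ (W.adoc u).isSome ∧ ppRel W r (.uri u) b}) (S : Set URI) :
    evalQ W (.seedV m (.base (.star (.sub m' qc)) (.graphV m' .empty))) S
      = {μ | ∃ u u', μ = pairMap m (.uri u) m' (.uri u') ∧ (W.adoc u).isSome ∧
          (W.adoc u').isSome ∧ Relation.ReflTransGen (step W r) u u'} := by
  have hbase : ∀ u : URI, evalQ W (.base (.star (.sub m' qc)) (.graphV m' .empty)) {u}
      = {μ | ∃ u', μ = single m' (.uri u') ∧ (W.adoc u).isSome ∧ (W.adoc u').isSome ∧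
          Relation.ReflTransGen (step W r) u u'} := by
    intro u
    have hseed : {u'' | ∃ u0 ∈ ({u} : Set URI), u'' ∈ evalL W (.star (.sub m' qc)) u0}
        = {u' | (W.adoc u).isSome ∧ Relation.ReflTransGen (step W r) u u'} := by
      ext u''
      simp only [Set.mem_setOf_eq, Set.mem_singleton_iff]
      constructor
      · rintro ⟨u0, rfl, h⟩
        rw [evalL_star_sub_spec qc hqc] at h
        exact h
      · intro h
        exact ⟨u, rfl, by rw [evalL_star_sub_spec qc hqc]; exact h⟩
    show evalGP _ _ _ = _
    rw [hseed, evalGP_graphV_empty m']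
    ext μ
    simp only [Set.mem_setOf_eq]
    constructor
    · rintro ⟨u', ⟨hs, hrtg⟩, hs', rfl⟩
      exact ⟨u', rfl, hs, hs', hrtg⟩
    · rintro ⟨u', rfl, hs, hs', hrtg⟩
      exact ⟨u', ⟨hs, hrtg⟩, hs', rfl⟩
  ext μ
  show μ ∈ ⋃ u : URI, mjoin _ {single m (.uri u)} ↔ _
  simp only [Set.mem_iUnion, Set.mem_setOf_eq]
  constructor
  · rintro ⟨u, hμ⟩
    rw [mem_mjoin] at hμ
    obtain ⟨μ1, hμ1, μ2, hμ2, hcompat, rfl⟩ := hμ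
    rw [hbase u] at hμ1
    obtain ⟨u', rfl, hs, hs', hrtg⟩ := hμ1
    rw [Set.mem_singleton_iff] at hμ2
    subst hμ2
    refine ⟨u, u', ?_, hs, hs', hrtg⟩
    funext v
    simp only [munion_app, single_app, pairMap_app]
    split_ifs <;> simp_all [Option.or]
  · rintro ⟨u, u', rfl, hs, hs', hrtg⟩
    refine ⟨u, ?_⟩
    rw [mem_mjoin]
    refine ⟨single m' (.uri u'), ?_, single m (.uri u), rfl, ?_, ?_⟩
    · rw [hbase u]
      exact ⟨u', rfl, hs, hs', hrtg⟩
    · intro v a' b' h1 h2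
      rw [single_app] at h1 h2
      split_ifs at h1 h2
      simp_all
    · funext v
      simp only [munion_app, single_app, pairMap_app]
      split_ifs <;> simp_all [Option.or]

/-! ### The translation from property paths to LDQL -/

def Qpair : PP → ((Var → Var → LDQL) × (Var → LDQL))
  | .uri p =>
    (fun x y => .seedV x (.base .eps (.graphV x (.tp ⟨.var x, .term (.uri p), .var y⟩))),
     fun y => .proj {y} (.base .eps (.graphV (y+1) (.tp ⟨.var (y+1), .term (.uri p), .var y⟩))))
  | .neg us =>
    (fun x y => .proj {x,y} (.seedV x (.base .eps (.graphV x
        (.filter (.tp ⟨.var x, .var (x+y+1), .var y⟩) (negCond (x+y+1) us))))),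
     fun y => .proj {y} (.base .eps (.graphV (y+1)
        (.filter (.tp ⟨.var (y+1), .var (y+2), .var y⟩) (negCond (y+2) us)))))
  | .seq r1 r2 =>
    (fun x y => .proj {x,y} (.qand ((Qpair r1).1 x (x+y+1)) ((Qpair r2).1 (x+y+1) y)),
     fun y => .proj {y} (.qand ((Qpair r1).2 (y+1)) ((Qpair r2).1 (y+1) y)))
  | .alt r1 r2 =>
    (fun x y => .qunion ((Qpair r1).1 x y) ((Qpair r2).1 x y),
     fun y => .qunion ((Qpair r1).2 y) ((Qpair r2).2 y))
  | .star r =>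
    (fun x y => .qunion (qId x y)
       (.qunion ((Qpair r).1 x y)
         (.proj {x,y} (.qand (.qand ((Qpair r).1 x (x+y+1))
            (.seedV (x+y+1) (.base (.star (.sub (x+y+2) ((Qpair r).2 (x+y+2))))
              (.graphV (x+y+2) .empty))))
          ((Qpair r).1 (x+y+2) y)))),
     fun y => .qunion (.qand (.base .eps (.graphV y .empty)) (qTerms y))
       (.qunion ((Qpair r).2 y)
         (.proj {y} (.qand (.qand ((Qpair r).2 (y+1))
            (.seedV (y+1) (.base (.star (.sub (y+2) ((Qpair r).2 (y+2))))
              (.graphV (y+2) .empty))))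
          ((Qpair r).1 (y+2) y)))))
/-! ### evalQ unfolding helpers -/

lemma evalQ_seedV (W : Web) (v : Var) (q : LDQL) (S : Set URI) :
    evalQ W (.seedV v q) S = ⋃ u : URI, mjoin (evalQ W q {u}) {single v (.uri u)} := by
  simp only [evalQ]

lemma evalQ_qand (W : Web) (q1 q2 : LDQL) (S : Set URI) :
    evalQ W (.qand q1 q2) S = mjoin (evalQ W q1 S) (evalQ W q2 S) := by
  simp only [evalQ]

lemma evalQ_qunion (W : Web) (q1 q2 : LDQL) (S : Set URI) :
    evalQ W (.qunion q1 q2) S = evalQ W q1 S ∪ evalQ W q2 S := by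
  simp only [evalQ]

lemma evalQ_proj (W : Web) (V : Finset Var) (q : LDQL) (S : Set URI) :
    evalQ W (.proj V q) S = restrictV V '' evalQ W q S := by
  simp only [evalQ]

/-! ### Correctness of the translation -/

theorem Qspec : ∀ r : PP,
    (∀ x y, x ≠ y → ∀ (W : Web) (S : Set URI),
      evalQ W ((Qpair r).1 x y) S = {μ | ∃ a b, μ = pairMap x a y b ∧ ppRel W r a b}) ∧
    (∀ y (W : Web) (u : URI),
      evalQ W ((Qpair r).2 y) {u}
        = {μ | ∃ b, μ = single y b ∧ (W.adoc u).isSome ∧ ppRel W r (.uri u) b}) := by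
  intro r
  induction r with
  | uri p =>
    constructor
    · intro x y hxy W S
      simp only [Qpair]
      rw [evalQ_seedV]
      ext μ
      simp only [Set.mem_iUnion, mem_mjoin, Set.mem_setOf_eq, Set.mem_singleton_iff]
      constructor
      · rintro ⟨u, μ1, hμ1, μ2, rfl, hcompat, rfl⟩
        rw [evalQ_base_eps, evalGP_graphV_tp hxy p] at hμ1
        obtain ⟨u0, d, b, ⟨hu0, _⟩, hd, hmem, rfl⟩ := hμ1
        rw [Set.mem_singleton_iff] at hu0
        subst hu0
        refine ⟨.uri u0, b, ?_, ppRel_uri_iff.2 ⟨u0, d, rfl, hd, hmem⟩⟩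
        exact munion_single_absorb (by simp [pairMap_app])
      · rintro ⟨a, b, rfl, hrel⟩
        rw [ppRel_uri_iff] at hrel
        obtain ⟨u, d, rfl, hd, hmem⟩ := hrel
        refine ⟨u, pairMap x (.uri u) y b, ?_, single x (.uri u), rfl, ?_, ?_⟩
        · rw [evalQ_base_eps, evalGP_graphV_tp hxy p]
          exact ⟨u, d, b, ⟨rfl, by simp [hd]⟩, hd, hmem, rfl⟩
        · intro v a' b' h1 h2
          rw [single_app] at h2
          split_ifs at h2 with hv
          subst hv
          rw [pairMap_app] at h1
          simp_all
        · exact (munion_single_absorb (by simp [pairMap_app])).symm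
    · intro y W u
      have hne : (y+1 : ℕ) ≠ y := (nat_ne_succ y 1 Nat.one_pos).symm
      have hne' : y ≠ y+1 := nat_ne_succ y 1 Nat.one_pos
      simp only [Qpair]
      rw [evalQ_proj, evalQ_base_eps, evalGP_graphV_tp hne p]
      ext μ
      simp only [Set.mem_image, Set.mem_setOf_eq]
      constructor
      · rintro ⟨ν, ⟨u0, d, b, ⟨hu0, hsome⟩, hd, hmem, rfl⟩, rfl⟩
        rw [Set.mem_singleton_iff] at hu0
        subst hu0
        refine ⟨b, restrict_single_eq (by simp [pairMap_app, hne']), hsome,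
          ppRel_uri_iff.2 ⟨u0, d, rfl, hd, hmem⟩⟩
      · rintro ⟨b, rfl, hsome, hrel⟩
        rw [ppRel_uri_iff] at hrel
        obtain ⟨u', d, huu, hd, hmem⟩ := hrel
        rw [Obj.uri.injEq] at huu
        subst huu
        refine ⟨pairMap (y+1) (.uri u) y b, ⟨u, d, b, ⟨rfl, hsome⟩, hd, hmem, rfl⟩,
          restrict_single_eq (by simp [pairMap_app, hne'])⟩
  | neg us =>
    constructor
    · intro x y hxy W S
      have hxz : x ≠ x+y+1 := nat_ne_add x y 1 Nat.one_pos
      have hzy : (x+y+1 : ℕ) ≠ y := (nat_ne_add' x y 1 Nat.one_pos).symm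
      have hyz : y ≠ x+y+1 := nat_ne_add' x y 1 Nat.one_pos
      simp only [Qpair]
      rw [evalQ_proj, evalQ_seedV]
      ext μ
      simp only [Set.mem_image, Set.mem_iUnion, mem_mjoin, Set.mem_setOf_eq,
        Set.mem_singleton_iff]
      constructor
      · rintro ⟨ν, ⟨u, μ1, hμ1, μ2, rfl, hcompat, rfl⟩, rfl⟩
        rw [evalQ_base_eps, evalGP_graphV_negtp hxz hxy hzy us] at hμ1
        obtain ⟨u0, d, q, b, ⟨hu0, _⟩, hd, hqn, hmem, rfl⟩ := hμ1
        rw [Set.mem_singleton_iff] at hu0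
        subst hu0
        have habs : munion (mk3 x (.uri u0) (x+y+1) (.uri q) y b) (single x (.uri u0))
            = mk3 x (.uri u0) (x+y+1) (.uri q) y b :=
          munion_single_absorb (by simp [mk3_app])
        rw [habs]
        refine ⟨.uri u0, b, ?_, ppRel_neg_iff.2 ⟨u0, d, q, rfl, hd, hqn, hmem⟩⟩
        apply restrict_pair_eq hxy
        · simp [mk3_app]
        · simp [mk3_app, hxy.symm, hyz]
      · rintro ⟨a, b, rfl, hrel⟩
        rw [ppRel_neg_iff] at hrel
        obtain ⟨u, d, q, rfl, hd, hqn, hmem⟩ := hrel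
        refine ⟨mk3 x (.uri u) (x+y+1) (.uri q) y b,
          ⟨u, mk3 x (.uri u) (x+y+1) (.uri q) y b, ?_, single x (.uri u), rfl, ?_, ?_⟩, ?_⟩
        · rw [evalQ_base_eps, evalGP_graphV_negtp hxz hxy hzy us]
          exact ⟨u, d, q, b, ⟨rfl, by simp [hd]⟩, hd, hqn, hmem, rfl⟩
        · intro v a' b' h1 h2
          rw [single_app] at h2
          split_ifs at h2 with hv
          subst hv
          rw [mk3_app] at h1
          simp_all
        · exact (munion_single_absorb (by simp [mk3_app])).symm
        · apply restrict_pair_eq hxy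
          · simp [mk3_app]
          · simp [mk3_app, hxy.symm, hyz]
    · intro y W u
      have h1y : (y+1 : ℕ) ≠ y := (nat_ne_succ y 1 Nat.one_pos).symm
      have h2y : (y+2 : ℕ) ≠ y := (nat_ne_succ y 2 (Nat.succ_pos 1)).symm
      have hy1 : y ≠ y+1 := nat_ne_succ y 1 Nat.one_pos
      have hy2 : y ≠ y+2 := nat_ne_succ y 2 (Nat.succ_pos 1)
      have h12 : (y+1 : ℕ) ≠ y+2 := nat_succ_ne y 1 2 (by decide)
      simp only [Qpair]
      rw [evalQ_proj, evalQ_base_eps, evalGP_graphV_negtp h12 h1y h2y us]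
      ext μ
      simp only [Set.mem_image, Set.mem_setOf_eq]
      constructor
      · rintro ⟨ν, ⟨u0, d, q, b, ⟨hu0, hsome⟩, hd, hqn, hmem, rfl⟩, rfl⟩
        rw [Set.mem_singleton_iff] at hu0
        subst hu0
        refine ⟨b, restrict_single_eq (by simp [mk3_app, hy1, hy2]), hsome,
          ppRel_neg_iff.2 ⟨u0, d, q, rfl, hd, hqn, hmem⟩⟩
      · rintro ⟨b, rfl, hsome, hrel⟩
        rw [ppRel_neg_iff] at hrel
        obtain ⟨u', d, q, huu, hd, hqn, hmem⟩ := hrel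
        rw [Obj.uri.injEq] at huu
        subst huu
        exact ⟨mk3 (y+1) (.uri u) (y+2) (.uri q) y b,
          ⟨u, d, q, b, ⟨rfl, hsome⟩, hd, hqn, hmem, rfl⟩,
          restrict_single_eq (by simp [mk3_app, hy1, hy2])⟩
  | seq r1 r2 ih1 ih2 =>
    obtain ⟨ih1q, ih1c⟩ := ih1
    obtain ⟨ih2q, ih2c⟩ := ih2
    constructor
    · intro x y hxy W S
      have hxm : x ≠ x+y+1 := nat_ne_add x y 1 Nat.one_pos
      have hmy : (x+y+1 : ℕ) ≠ y := (nat_ne_add' x y 1 Nat.one_pos).symm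
      have hym : y ≠ x+y+1 := nat_ne_add' x y 1 Nat.one_pos
      simp only [Qpair]
      rw [evalQ_proj, evalQ_qand, ih1q x (x+y+1) hxm, ih2q (x+y+1) y hmy,
        mjoin_pair_pair hxm hxy hmy]
      ext μ
      simp only [Set.mem_image, Set.mem_setOf_eq]
      constructor
      · rintro ⟨ν, ⟨a, b, c, rfl, h1, h2⟩, rfl⟩
        refine ⟨a, c, ?_, b, h1, h2⟩
        apply restrict_pair_eq hxy
        · simp [mk3_app]
        · simp [mk3_app, hxy.symm, hym]
      · rintro ⟨a, c, rfl, b, h1, h2⟩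
        refine ⟨mk3 x a (x+y+1) b y c, ⟨a, b, c, rfl, h1, h2⟩, ?_⟩
        apply restrict_pair_eq hxy
        · simp [mk3_app]
        · simp [mk3_app, hxy.symm, hym]
    · intro y W u
      have hmy : (y+1 : ℕ) ≠ y := (nat_ne_succ y 1 Nat.one_pos).symm
      have hym : y ≠ y+1 := nat_ne_succ y 1 Nat.one_pos
      simp only [Qpair]
      rw [evalQ_proj, evalQ_qand, ih1c (y+1) W u, ih2q (y+1) y hmy,
        mjoin_single_pair hmy (fun b => (W.adoc u).isSome ∧ ppRel W r1 (.uri u) b)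
          (fun b c => ppRel W r2 b c)]
      ext μ
      simp only [Set.mem_image, Set.mem_setOf_eq]
      constructor
      · rintro ⟨ν, ⟨b, c, rfl, ⟨hsome, h1⟩, h2⟩, rfl⟩
        exact ⟨c, restrict_single_eq (by simp [pairMap_app, hym]), hsome, b, h1, h2⟩
      · rintro ⟨c, rfl, hsome, b, h1, h2⟩
        exact ⟨pairMap (y+1) b y c, ⟨b, c, rfl, ⟨hsome, h1⟩, h2⟩,
          restrict_single_eq (by simp [pairMap_app, hym])⟩
  | alt r1 r2 ih1 ih2 =>
    obtain ⟨ih1q, ih1c⟩ := ih1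
    obtain ⟨ih2q, ih2c⟩ := ih2
    constructor
    · intro x y hxy W S
      simp only [Qpair]
      rw [evalQ_qunion, ih1q x y hxy, ih2q x y hxy]
      ext μ
      simp only [Set.mem_union, Set.mem_setOf_eq]
      constructor
      · rintro (⟨a, b, rfl, h⟩ | ⟨a, b, rfl, h⟩)
        · exact ⟨a, b, rfl, Or.inl h⟩
        · exact ⟨a, b, rfl, Or.inr h⟩
      · rintro ⟨a, b, rfl, (h | h)⟩
        · exact Or.inl ⟨a, b, rfl, h⟩
        · exact Or.inr ⟨a, b, rfl, h⟩
    · intro y W u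
      simp only [Qpair]
      rw [evalQ_qunion, ih1c y W u, ih2c y W u]
      ext μ
      simp only [Set.mem_union, Set.mem_setOf_eq]
      constructor
      · rintro (⟨b, rfl, hs, h⟩ | ⟨b, rfl, hs, h⟩)
        · exact ⟨b, rfl, hs, Or.inl h⟩
        · exact ⟨b, rfl, hs, Or.inr h⟩
      · rintro ⟨b, rfl, hs, (h | h)⟩
        · exact Or.inl ⟨b, rfl, hs, h⟩
        · exact Or.inr ⟨b, rfl, hs, h⟩
  | star r ih =>
    obtain ⟨ihq, ihc⟩ := ih
    constructor
    · intro x y hxy W S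
      have hxm : x ≠ x+y+1 := nat_ne_add x y 1 Nat.one_pos
      have hxm' : x ≠ x+y+2 := nat_ne_add x y 2 (Nat.succ_pos 1)
      have hym : y ≠ x+y+1 := nat_ne_add' x y 1 Nat.one_pos
      have hym' : y ≠ x+y+2 := nat_ne_add' x y 2 (Nat.succ_pos 1)
      have hmy : (x+y+1 : ℕ) ≠ y := hym.symm
      have hm'y : (x+y+2 : ℕ) ≠ y := hym'.symm
      have hmm' : (x+y+1 : ℕ) ≠ x+y+2 := nat_add_ne x y 1 2 (by decide)
      simp only [Qpair]
      rw [evalQ_qunion, evalQ_qunion, qId_spec hxy, ihq x y hxy]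
      have hchain : evalQ W (.proj {x,y} (.qand (.qand ((Qpair r).1 x (x+y+1))
            (.seedV (x+y+1) (.base (.star (.sub (x+y+2) ((Qpair r).2 (x+y+2))))
              (.graphV (x+y+2) .empty)))) ((Qpair r).1 (x+y+2) y))) S
          = {μ | ∃ a d0, μ = pairMap x a y d0 ∧ ∃ u u', (W.adoc u).isSome ∧
              (W.adoc u').isSome ∧ ppRel W r a (.uri u) ∧
              Relation.ReflTransGen (step W r) u u' ∧ ppRel W r (.uri u') d0} := by
        rw [evalQ_proj, evalQ_qand, evalQ_qand, ihq x (x+y+1) hxm,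
          link_spec hmm' ((Qpair r).2 (x+y+2)) (fun u0 => ihc (x+y+2) W u0) S,
          ihq (x+y+2) y hm'y]
        have hl : {μ | ∃ u u', μ = pairMap (x+y+1) (.uri u) (x+y+2) (.uri u') ∧
              (W.adoc u).isSome ∧ (W.adoc u').isSome ∧
              Relation.ReflTransGen (step W r) u u'}
            = {μ | ∃ b c, μ = pairMap (x+y+1) b (x+y+2) c ∧
                (∃ u u', b = .uri u ∧ c = .uri u' ∧ (W.adoc u).isSome ∧
                  (W.adoc u').isSome ∧ Relation.ReflTransGen (step W r) u u')} := by
          ext ν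
          simp only [Set.mem_setOf_eq]
          constructor
          · rintro ⟨u, u', rfl, h1, h2, h3⟩
            exact ⟨.uri u, .uri u', rfl, u, u', rfl, rfl, h1, h2, h3⟩
          · rintro ⟨b, c, rfl, u, u', rfl, rfl, h1, h2, h3⟩
            exact ⟨u, u', rfl, h1, h2, h3⟩
        rw [hl, mjoin_pair_pair hxm hxm' hmm',
          mjoin_mk3_pair hxm hxm' hxy hmm' hmy hm'y]
        ext μ
        simp only [Set.mem_image, Set.mem_setOf_eq]
        constructor
        · rintro ⟨ν, ⟨a, b, c, d0, rfl, ⟨h1, u, u', rfl, rfl, hs, hs', hrtg⟩, h2⟩, rfl⟩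
          refine ⟨a, d0, ?_, u, u', hs, hs', h1, hrtg, h2⟩
          apply restrict_pair_eq hxy
          · simp [mk4_app]
          · simp [mk4_app, hxy.symm, hym, hym']
        · rintro ⟨a, d0, rfl, u, u', hs, hs', h1, hrtg, h2⟩
          refine ⟨mk4 x a (x+y+1) (.uri u) (x+y+2) (.uri u') y d0,
            ⟨a, .uri u, .uri u', d0, rfl, ⟨h1, u, u', rfl, rfl, hs, hs', hrtg⟩, h2⟩, ?_⟩
          apply restrict_pair_eq hxy
          · simp [mk4_app]
          · simp [mk4_app, hxy.symm, hym, hym']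
      rw [hchain]
      ext μ
      simp only [Set.mem_union, Set.mem_setOf_eq]
      constructor
      · rintro (⟨a, rfl, hterm⟩ | ⟨a, b, rfl, hrel⟩ |
          ⟨a, d0, rfl, u, u', hs, hs', h1, hrtg, h2⟩)
        · exact ⟨a, a, rfl, Or.inl ⟨rfl, hterm⟩⟩
        · exact ⟨a, b, rfl, Or.inr (transGen_decomp.2 (Or.inl hrel))⟩
        · exact ⟨a, d0, rfl, Or.inr (transGen_decomp.2
            (Or.inr ⟨u, u', hs, hs', h1, hrtg, h2⟩))⟩
      · rintro ⟨a, b, rfl, (⟨rfl, hterm⟩ | htg)⟩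
        · exact Or.inl ⟨a, rfl, hterm⟩
        · rcases transGen_decomp.1 htg with h | ⟨u, u', hs, hs', h1, hrtg, h2⟩
          · exact Or.inr (Or.inl ⟨a, b, rfl, h⟩)
          · exact Or.inr (Or.inr ⟨a, b, rfl, u, u', hs, hs', h1, hrtg, h2⟩)
    · intro y W u
      have hy1 : y ≠ y+1 := nat_ne_succ y 1 Nat.one_pos
      have hy2 : y ≠ y+2 := nat_ne_succ y 2 (Nat.succ_pos 1)
      have h12 : (y+1 : ℕ) ≠ y+2 := nat_succ_ne y 1 2 (by decide)
      have h1y : (y+1 : ℕ) ≠ y := hy1.symm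
      have h2y : (y+2 : ℕ) ≠ y := hy2.symm
      simp only [Qpair]
      rw [evalQ_qunion, evalQ_qunion, ihc y W u]
      have hid : evalQ W (.qand (.base .eps (.graphV y .empty)) (qTerms y)) {u}
          = {μ | ∃ b, μ = single y b ∧ ((W.adoc u).isSome ∧ b = .uri u ∧ b ∈ termsW W)} := by
        rw [evalQ_qand, qTerms_spec, evalQ_base_eps, evalGP_graphV_empty y]
        ext ν
        rw [mem_mjoin]
        simp only [Set.mem_setOf_eq, Set.mem_singleton_iff]
        constructor
        · rintro ⟨μ1, ⟨u0, ⟨hu0, hs0⟩, _, rfl⟩, μ2, ⟨a, rfl, ha⟩, hcompat, rfl⟩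
          subst hu0
          have haeq : a = .uri u0 :=
            (hcompat y _ _ (by simp [single_app]) (by simp [single_app])).symm
          subst haeq
          exact ⟨.uri u0, munion_single_absorb (by simp [single_app]), hs0, rfl, ha⟩
        · rintro ⟨b, rfl, hs, rfl, ht⟩
          refine ⟨single y (.uri u), ⟨u, ⟨rfl, hs⟩, hs, rfl⟩, single y (.uri u),
            ⟨.uri u, rfl, ht⟩, ?_, (munion_single_absorb (by simp [single_app])).symm⟩
          intro v a' b' hh1 hh2
          rw [hh1] at hh2
          exact Option.some_inj.1 hh2
      rw [hid]
      have hchain : evalQ W (.proj {y} (.qand (.qand ((Qpair r).2 (y+1))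
            (.seedV (y+1) (.base (.star (.sub (y+2) ((Qpair r).2 (y+2))))
              (.graphV (y+2) .empty)))) ((Qpair r).1 (y+2) y))) {u}
          = {μ | ∃ d0, μ = single y d0 ∧ ((W.adoc u).isSome ∧ ∃ u1 u1',
              (W.adoc u1).isSome ∧ (W.adoc u1').isSome ∧ ppRel W r (.uri u) (.uri u1) ∧
              Relation.ReflTransGen (step W r) u1 u1' ∧ ppRel W r (.uri u1') d0)} := by
        rw [evalQ_proj, evalQ_qand, evalQ_qand, ihc (y+1) W u,
          link_spec h12 ((Qpair r).2 (y+2)) (fun u0 => ihc (y+2) W u0) {u},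
          ihq (y+2) y h2y]
        have hl : {μ | ∃ u1 u1', μ = pairMap (y+1) (.uri u1) (y+2) (.uri u1') ∧
              (W.adoc u1).isSome ∧ (W.adoc u1').isSome ∧
              Relation.ReflTransGen (step W r) u1 u1'}
            = {μ | ∃ b c, μ = pairMap (y+1) b (y+2) c ∧
                (∃ u1 u1', b = .uri u1 ∧ c = .uri u1' ∧ (W.adoc u1).isSome ∧
                  (W.adoc u1').isSome ∧ Relation.ReflTransGen (step W r) u1 u1')} := by
          ext ν
          simp only [Set.mem_setOf_eq]
          constructor
          · rintro ⟨u1, u1', rfl, hh1, hh2, hh3⟩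
            exact ⟨.uri u1, .uri u1', rfl, u1, u1', rfl, rfl, hh1, hh2, hh3⟩
          · rintro ⟨b, c, rfl, u1, u1', rfl, rfl, hh1, hh2, hh3⟩
            exact ⟨u1, u1', rfl, hh1, hh2, hh3⟩
        rw [hl, mjoin_single_pair h12
          (fun b => (W.adoc u).isSome ∧ ppRel W r (.uri u) b)
          (fun b c => ∃ u1 u1', b = .uri u1 ∧ c = .uri u1' ∧ (W.adoc u1).isSome ∧
            (W.adoc u1').isSome ∧ Relation.ReflTransGen (step W r) u1 u1'),
          mjoin_pair_pair h12 h1y h2y]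
        ext μ
        simp only [Set.mem_image, Set.mem_setOf_eq]
        constructor
        · rintro ⟨ν, ⟨b, c, d0, rfl, ⟨⟨hs, hrel1⟩, u1, u1', rfl, rfl, hs1, hs1', hrtg⟩,
            hrel2⟩, rfl⟩
          refine ⟨d0, ?_, hs, u1, u1', hs1, hs1', hrel1, hrtg, hrel2⟩
          apply restrict_single_eq
          simp [mk3_app, hy1, hy2]
        · rintro ⟨d0, rfl, hs, u1, u1', hs1, hs1', hrel1, hrtg, hrel2⟩
          refine ⟨mk3 (y+1) (.uri u1) (y+2) (.uri u1') y d0,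
            ⟨.uri u1, .uri u1', d0, rfl,
              ⟨⟨hs, hrel1⟩, u1, u1', rfl, rfl, hs1, hs1', hrtg⟩, hrel2⟩, ?_⟩
          apply restrict_single_eq
          simp [mk3_app, hy1, hy2]
      rw [hchain]
      ext μ
      simp only [Set.mem_union, Set.mem_setOf_eq]
      constructor
      · rintro (⟨b, rfl, hs, rfl, ht⟩ | ⟨b, rfl, hs, hrel⟩ |
          ⟨d0, rfl, hs, u1, u1', hs1, hs1', h1, hrtg, h2⟩)
        · exact ⟨.uri u, rfl, hs, Or.inl ⟨rfl, ht⟩⟩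
        · exact ⟨b, rfl, hs, Or.inr (transGen_decomp.2 (Or.inl hrel))⟩
        · exact ⟨d0, rfl, hs, Or.inr (transGen_decomp.2
            (Or.inr ⟨u1, u1', hs1, hs1', h1, hrtg, h2⟩))⟩
      · rintro ⟨b, rfl, hs, (⟨heq, ht⟩ | htg)⟩
        · exact Or.inl ⟨b, rfl, hs, heq.symm, heq ▸ ht⟩
        · rcases transGen_decomp.1 htg with h | ⟨u1, u1', hs1, hs1', h1, hrtg, h2⟩
          · exact Or.inr (Or.inl ⟨b, rfl, hs, h⟩)
          · exact Or.inr (Or.inr ⟨b, rfl, hs, u1, u1', hs1, hs1', h1, hrtg, h2⟩)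
/-! ### Final assembly -/

lemma eq_single {μ : Mapping} {v : Var} {a : Obj} (h : mdom μ = {v}) (hv : μ v = some a) :
    μ = single v a := by
  funext w
  rw [single_app]
  split_ifs with hw
  · subst hw; exact hv
  · have hnm : w ∉ mdom μ := by rw [h]; simp [hw]
    simpa [mdom] using hnm

lemma wrapA {W : Web} {r : PP} (v : Var) (c : Obj)
    (hq : evalQ W ((Qpair r).1 v (v+1)) (∅ : Set URI)
      = {μ | ∃ a b, μ = pairMap v a (v+1) b ∧ ppRel W r a b}) :
    evalQ W (.proj {v} (.qand ((Qpair r).1 v (v+1)) (qConst (v+1) c))) (∅ : Set URI)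
      = {μ | ∃ a, μ = single v a ∧ ppRel W r a c} := by
  have hne : v ≠ v+1 := nat_ne_succ v 1 Nat.one_pos
  rw [evalQ_proj, evalQ_qand, hq, qConst_spec, mjoin_pair_constR hne]
  ext μ
  simp only [Set.mem_image, Set.mem_setOf_eq]
  constructor
  · rintro ⟨ν, ⟨a, rfl, h⟩, rfl⟩
    exact ⟨a, restrict_single_eq (by simp [pairMap_app]), h⟩
  · rintro ⟨a, rfl, h⟩
    exact ⟨pairMap v a (v+1) c, ⟨a, rfl, h⟩, restrict_single_eq (by simp [pairMap_app])⟩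

lemma wrapB {W : Web} {r : PP} (v : Var) (c : Obj)
    (hq : evalQ W ((Qpair r).1 (v+1) v) (∅ : Set URI)
      = {μ | ∃ a b, μ = pairMap (v+1) a v b ∧ ppRel W r a b}) :
    evalQ W (.proj {v} (.qand ((Qpair r).1 (v+1) v) (qConst (v+1) c))) (∅ : Set URI)
      = {μ | ∃ b, μ = single v b ∧ ppRel W r c b} := by
  have hne : (v+1 : ℕ) ≠ v := (nat_ne_succ v 1 Nat.one_pos).symm
  have hne' : v ≠ v+1 := nat_ne_succ v 1 Nat.one_pos
  rw [evalQ_proj, evalQ_qand, hq, qConst_spec, mjoin_pair_constL hne]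
  ext μ
  simp only [Set.mem_image, Set.mem_setOf_eq]
  constructor
  · rintro ⟨ν, ⟨b, rfl, h⟩, rfl⟩
    exact ⟨b, restrict_single_eq (by simp [pairMap_app, hne']), h⟩
  · rintro ⟨b, rfl, h⟩
    exact ⟨pairMap (v+1) c v b, ⟨b, rfl, h⟩,
      restrict_single_eq (by simp [pairMap_app, hne'])⟩

lemma wrapC {W : Web} {r : PP} (c c' : Obj)
    (hq : evalQ W ((Qpair r).1 0 1) (∅ : Set URI)
      = {μ | ∃ a b, μ = pairMap 0 a 1 b ∧ ppRel W r a b}) :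
    evalQ W (.proj ∅ (.qand (.qand ((Qpair r).1 0 1) (qConst 0 c)) (qConst 1 c')))
        (∅ : Set URI)
      = {μ | μ = emptyMap ∧ ppRel W r c c'} := by
  have h01 : (0 : Var) ≠ 1 := Nat.zero_ne_one
  rw [evalQ_proj, evalQ_qand, evalQ_qand, hq, qConst_spec, qConst_spec,
    mjoin_pair_constL h01]
  have hm : {μ | ∃ b, μ = pairMap 0 c 1 b ∧ ppRel W r c b}
      = {μ | ∃ a b, μ = pairMap 0 a 1 b ∧ (a = c ∧ ppRel W r c b)} := by
    ext ν
    simp only [Set.mem_setOf_eq]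
    constructor
    · rintro ⟨b, rfl, h⟩; exact ⟨c, b, rfl, rfl, h⟩
    · rintro ⟨a, b, rfl, rfl, h⟩; exact ⟨b, rfl, h⟩
  rw [hm, mjoin_pair_constR h01]
  ext μ
  simp only [Set.mem_image, Set.mem_setOf_eq]
  constructor
  · rintro ⟨ν, ⟨a, rfl, rfl, h⟩, rfl⟩
    exact ⟨restrict_empty _, h⟩
  · rintro ⟨rfl, h⟩
    exact ⟨pairMap 0 c 1 c', ⟨c, rfl, rfl, h⟩, restrict_empty _⟩

lemma wrapD {W : Web} {r : PP} (v : Var)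
    (hq : evalQ W ((Qpair r).1 v (v+1)) (∅ : Set URI)
      = {μ | ∃ a b, μ = pairMap v a (v+1) b ∧ ppRel W r a b}) :
    evalQ W (.proj {v} (.qand ((Qpair r).1 v (v+1)) (qId v (v+1)))) (∅ : Set URI)
      = {μ | ∃ a, μ = single v a ∧ ppRel W r a a} := by
  have hne : v ≠ v+1 := nat_ne_succ v 1 Nat.one_pos
  rw [evalQ_proj, evalQ_qand, hq, qId_spec hne]
  have hm : {μ | ∃ a, μ = pairMap v a (v+1) a ∧ a ∈ termsW W}
      = {μ | ∃ a b, μ = pairMap v a (v+1) b ∧ (a = b ∧ a ∈ termsW W)} := by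
    ext ν
    simp only [Set.mem_setOf_eq]
    constructor
    · rintro ⟨a, rfl, h⟩; exact ⟨a, a, rfl, rfl, h⟩
    · rintro ⟨a, b, rfl, rfl, h⟩; exact ⟨a, rfl, h⟩
  rw [hm, mjoin_pair_pair_same hne]
  ext μ
  simp only [Set.mem_image, Set.mem_setOf_eq]
  constructor
  · rintro ⟨ν, ⟨a, b, rfl, hrel, rfl, hterm⟩, rfl⟩
    exact ⟨a, restrict_single_eq (by simp [pairMap_app]), hrel⟩
  · rintro ⟨a, rfl, hrel⟩
    exact ⟨pairMap v a (v+1) a, ⟨a, a, rfl, hrel, rfl, (ppRel_terms hrel).1⟩,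
      restrict_single_eq (by simp [pairMap_app])⟩

/-! ### Characterizations of the context-based pattern evaluation -/

lemma ctxt_var_var {W : Web} {r : PP} {v v' : Var} (hne : v ≠ v') :
    ctxtEvalPat W (.var v) r (.var v')
      = {μ | ∃ a b, μ = pairMap v a v' b ∧ ppRel W r a b} := by
  have hvars : ppVars (.var v) (.var v') = {v, v'} := by
    ext w
    simp only [ppVars, Set.mem_setOf_eq, PPTerm.var.injEq, Set.mem_insert_iff,
      Set.mem_singleton_iff]
    constructor
    · rintro (h | h)
      · exact Or.inl h.symm
      · exact Or.inr h.symm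
    · rintro (h | h)
      · exact Or.inl h.symm
      · exact Or.inr h.symm
  ext μ
  simp only [ctxtEvalPat, Set.mem_setOf_eq, PPTerm.toPval]
  constructor
  · rintro ⟨hdom, a, b, ha, hb, hrel⟩
    exact ⟨a, b, eq_pairMap hne (hdom.trans hvars) ha hb, hrel⟩
  · rintro ⟨a, b, rfl, hrel⟩
    exact ⟨(mdom_pairMap hne a b).trans hvars.symm, a, b, by simp [pairMap_app],
      by simp [pairMap_app, hne.symm], hrel⟩

lemma ctxt_var_same {W : Web} {r : PP} {v : Var} :
    ctxtEvalPat W (.var v) r (.var v)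
      = {μ | ∃ a, μ = single v a ∧ ppRel W r a a} := by
  have hvars : ppVars (.var v) (.var v) = {v} := by
    ext w
    simp only [ppVars, Set.mem_setOf_eq, PPTerm.var.injEq, Set.mem_singleton_iff, or_self]
    exact eq_comm
  ext μ
  simp only [ctxtEvalPat, Set.mem_setOf_eq, PPTerm.toPval]
  constructor
  · rintro ⟨hdom, a, b, ha, hb, hrel⟩
    rw [ha] at hb
    obtain rfl := Option.some_inj.1 hb
    exact ⟨a, eq_single (hdom.trans hvars) ha, hrel⟩
  · rintro ⟨a, rfl, hrel⟩
    exact ⟨(mdom_single v a).trans hvars.symm, a, a, by simp [single_app],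
      by simp [single_app], hrel⟩

lemma ctxt_var_const {W : Web} {r : PP} {v : Var} {β : PPTerm} {c : Obj}
    (hco : ∀ μ, β.toPval μ = some c) (hnv : ∀ w, β ≠ .var w) :
    ctxtEvalPat W (.var v) r β = {μ | ∃ a, μ = single v a ∧ ppRel W r a c} := by
  have hvars : ppVars (.var v) β = {v} := by
    ext w
    simp only [ppVars, Set.mem_setOf_eq, PPTerm.var.injEq, Set.mem_singleton_iff]
    constructor
    · rintro (h | h)
      · exact h.symm
      · exact absurd h (hnv w)
    · rintro rfl
      exact Or.inl rfl
  ext μ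
  simp only [ctxtEvalPat, Set.mem_setOf_eq]
  constructor
  · rintro ⟨hdom, a, b, ha, hb, hrel⟩
    rw [hco μ] at hb
    obtain rfl := Option.some_inj.1 hb
    have ha' : μ v = some a := ha
    exact ⟨a, eq_single (hdom.trans hvars) ha', hrel⟩
  · rintro ⟨a, rfl, hrel⟩
    exact ⟨(mdom_single v a).trans hvars.symm, a, c,
      show single v a v = some a by simp [single_app], hco _, hrel⟩

lemma ctxt_const_var {W : Web} {r : PP} {v : Var} {α : PPTerm} {c : Obj}
    (hco : ∀ μ, α.toPval μ = some c) (hnv : ∀ w, α ≠ .var w) :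
    ctxtEvalPat W α r (.var v) = {μ | ∃ b, μ = single v b ∧ ppRel W r c b} := by
  have hvars : ppVars α (.var v) = {v} := by
    ext w
    simp only [ppVars, Set.mem_setOf_eq, PPTerm.var.injEq, Set.mem_singleton_iff]
    constructor
    · rintro (h | h)
      · exact absurd h (hnv w)
      · exact h.symm
    · rintro rfl
      exact Or.inr rfl
  ext μ
  simp only [ctxtEvalPat, Set.mem_setOf_eq]
  constructor
  · rintro ⟨hdom, a, b, ha, hb, hrel⟩
    rw [hco μ] at ha
    obtain rfl := Option.some_inj.1 ha
    have hb' : μ v = some b := hb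
    exact ⟨b, eq_single (hdom.trans hvars) hb', hrel⟩
  · rintro ⟨b, rfl, hrel⟩
    exact ⟨(mdom_single v b).trans hvars.symm, c, b, hco _,
      show single v b v = some b by simp [single_app], hrel⟩

lemma ctxt_const_const {W : Web} {r : PP} {α β : PPTerm} {c c' : Obj}
    (hco : ∀ μ, α.toPval μ = some c) (hnv : ∀ w, α ≠ .var w)
    (hco' : ∀ μ, β.toPval μ = some c') (hnv' : ∀ w, β ≠ .var w) :
    ctxtEvalPat W α r β = {μ | μ = emptyMap ∧ ppRel W r c c'} := by
  have hvars : ppVars α β = ∅ := by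
    ext w
    simp only [ppVars, Set.mem_setOf_eq, Set.mem_empty_iff_false, iff_false]
    rintro (h | h)
    · exact hnv w h
    · exact hnv' w h
  ext μ
  simp only [ctxtEvalPat, Set.mem_setOf_eq]
  constructor
  · rintro ⟨hdom, a, b, ha, hb, hrel⟩
    rw [hco μ] at ha
    rw [hco' μ] at hb
    obtain rfl := Option.some_inj.1 ha
    obtain rfl := Option.some_inj.1 hb
    exact ⟨eq_emptyMap (hdom.trans hvars), hrel⟩
  · rintro ⟨rfl, hrel⟩
    refine ⟨?_, c, c', hco _, hco' _, hrel⟩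
    rw [hvars]
    ext w
    simp [mdom, emptyMap]

/-- Every PP-pattern under context-based semantics can be
expressed as an LDQL query (evaluated with the empty seed set). -/
theorem PPpattern_expressible_in_LDQL (α β : PPTerm) (r : PP) :
    ∃ q : LDQL, ∀ W : Web, ctxtEvalPat W α r β = evalQ W q (∅ : Set URI) := by
  obtain ⟨hq, hc⟩ := Qspec r
  cases α with
  | var v =>
    cases β with
    | var v' =>
      by_cases hvv : v = v'
      · subst hvv
        refine ⟨.proj {v} (.qand ((Qpair r).1 v (v+1)) (qId v (v+1))), fun W => ?_⟩
        rw [ctxt_var_same, wrapD v (hq v (v+1) (nat_ne_succ v 1 Nat.one_pos) W ∅)]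
      · refine ⟨(Qpair r).1 v v', fun W => ?_⟩
        rw [ctxt_var_var hvv, hq v v' hvv W ∅]
    | uri b0 =>
      refine ⟨.proj {v} (.qand ((Qpair r).1 v (v+1)) (qConst (v+1) (.uri b0))),
        fun W => ?_⟩
      rw [ctxt_var_const (β := .uri b0) (c := .uri b0) (fun μ => rfl) (fun w h => nomatch h),
        wrapA v (.uri b0) (hq v (v+1) (nat_ne_succ v 1 Nat.one_pos) W ∅)]
    | lit l0 =>
      refine ⟨.proj {v} (.qand ((Qpair r).1 v (v+1)) (qConst (v+1) (.lit l0))),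
        fun W => ?_⟩
      rw [ctxt_var_const (β := .lit l0) (c := .lit l0) (fun μ => rfl) (fun w h => nomatch h),
        wrapA v (.lit l0) (hq v (v+1) (nat_ne_succ v 1 Nat.one_pos) W ∅)]
  | uri a0 =>
    cases β with
    | var v =>
      refine ⟨.proj {v} (.qand ((Qpair r).1 (v+1) v) (qConst (v+1) (.uri a0))),
        fun W => ?_⟩
      rw [ctxt_const_var (α := .uri a0) (c := .uri a0) (fun μ => rfl) (fun w h => nomatch h),
        wrapB v (.uri a0) (hq (v+1) v (nat_ne_succ v 1 Nat.one_pos).symm W ∅)]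
    | uri b0 =>
      refine ⟨.proj ∅ (.qand (.qand ((Qpair r).1 0 1) (qConst 0 (.uri a0)))
        (qConst 1 (.uri b0))), fun W => ?_⟩
      rw [ctxt_const_const (α := .uri a0) (β := .uri b0) (c := .uri a0) (c' := .uri b0)
          (fun μ => rfl) (fun w h => nomatch h) (fun μ => rfl) (fun w h => nomatch h),
        wrapC (.uri a0) (.uri b0) (hq 0 1 Nat.zero_ne_one W ∅)]
    | lit b0 =>
      refine ⟨.proj ∅ (.qand (.qand ((Qpair r).1 0 1) (qConst 0 (.uri a0)))
        (qConst 1 (.lit b0))), fun W => ?_⟩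
      rw [ctxt_const_const (α := .uri a0) (β := .lit b0) (c := .uri a0) (c' := .lit b0)
          (fun μ => rfl) (fun w h => nomatch h) (fun μ => rfl) (fun w h => nomatch h),
        wrapC (.uri a0) (.lit b0) (hq 0 1 Nat.zero_ne_one W ∅)]
  | lit a0 =>
    cases β with
    | var v =>
      refine ⟨.proj {v} (.qand ((Qpair r).1 (v+1) v) (qConst (v+1) (.lit a0))),
        fun W => ?_⟩
      rw [ctxt_const_var (α := .lit a0) (c := .lit a0) (fun μ => rfl) (fun w h => nomatch h),
        wrapB v (.lit a0) (hq (v+1) v (nat_ne_succ v 1 Nat.one_pos).symm W ∅)]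
    | uri b0 =>
      refine ⟨.proj ∅ (.qand (.qand ((Qpair r).1 0 1) (qConst 0 (.lit a0)))
        (qConst 1 (.uri b0))), fun W => ?_⟩
      rw [ctxt_const_const (α := .lit a0) (β := .uri b0) (c := .lit a0) (c' := .uri b0)
          (fun μ => rfl) (fun w h => nomatch h) (fun μ => rfl) (fun w h => nomatch h),
        wrapC (.lit a0) (.uri b0) (hq 0 1 Nat.zero_ne_one W ∅)]
    | lit b0 =>
      refine ⟨.proj ∅ (.qand (.qand ((Qpair r).1 0 1) (qConst 0 (.lit a0)))
        (qConst 1 (.lit b0))), fun W => ?_⟩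
      rw [ctxt_const_const (α := .lit a0) (β := .lit b0) (c := .lit a0) (c' := .lit b0)
          (fun μ => rfl) (fun w h => nomatch h) (fun μ => rfl) (fun w h => nomatch h),
        wrapC (.lit a0) (.lit b0) (hq 0 1 Nat.zero_ne_one W ∅)]

end

end LDQLFormal
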